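/- arXiv:2408.01135 — 3 statements merged into one kernel-verified Lean document; each statement's English description precedes it below -/
import Mathlib

section
/- Let X be a real Banach space. The following are equivalent: (1) X has the Schur property; (2) every bounded sequence in X has a subsequence which is either norm convergent or equivalent to the canonical basis of ℓ1; (3) every weakly precompact subset of X is relatively compact in the norm topology. -/
open Filter Topology Bornology

/-- A sequence is equivalent to the canonical basis of `ℓ₁` if there are constants
`0 < c` and `0 < C` with `c * ∑ |aᵢ| ≤ ‖∑ aᵢ • xᵢ‖ ≤ C * ∑ |aᵢ|` for all finite scalar choices. -/
def IsEquivL1Basis {X : Type*} [NormedAddCommGroup X] [NormedSpace ℝ X] (x : ℕ → X) : Prop :=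
  ∃ c C : ℝ, 0 < c ∧ 0 < C ∧ ∀ (n : ℕ) (a : Fin n → ℝ),
    c * ∑ i, |a i| ≤ ‖∑ i, a i • x (i : ℕ)‖ ∧ ‖∑ i, a i • x (i : ℕ)‖ ≤ C * ∑ i, |a i|

/-- A bounded set is weakly precompact if it contains no sequence equivalent to the
canonical basis of `ℓ₁`. -/
def WeaklyPrecompact {X : Type*} [NormedAddCommGroup X] [NormedSpace ℝ X] (A : Set X) : Prop :=
  IsBounded A ∧ ∀ x : ℕ → X, (∀ n, x n ∈ A) → ¬ IsEquivL1Basis x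

/-- A sequence is weakly Cauchy if `(f (x n))` converges for every continuous linear functional. -/
def IsWeaklyCauchy {X : Type*} [NormedAddCommGroup X] [NormedSpace ℝ X] (x : ℕ → X) : Prop :=
  ∀ f : X →L[ℝ] ℝ, ∃ l : ℝ, Tendsto (fun n => f (x n)) atTop (𝓝 l)

/-- Convergence of a sequence in the weak topology. -/
def WeaklyConvergesTo {X : Type*} [NormedAddCommGroup X] [NormedSpace ℝ X]
    (x : ℕ → X) (l : X) : Prop :=
  Tendsto (fun n => toWeakSpace ℝ X (x n)) atTop (𝓝 (toWeakSpace ℝ X l))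

/-- A set is relatively weakly compact if its closure in the weak topology is compact there. -/
def RelWeaklyCompact {X : Type*} [NormedAddCommGroup X] [NormedSpace ℝ X] (A : Set X) : Prop :=
  IsCompact (closure (toWeakSpace ℝ X '' A))

section Proof

variable {X : Type*} [NormedAddCommGroup X] [NormedSpace ℝ X]


variable {X : Type*} [NormedAddCommGroup X] [NormedSpace ℝ X]

/-- Finset version of the ℓ¹ lower/upper bounds. -/
lemma IsEquivL1Basis.finset {y : ℕ → X} (h : IsEquivL1Basis y) :
    ∃ c C : ℝ, 0 < c ∧ 0 < C ∧ ∀ (s : Finset ℕ) (a : ℕ → ℝ),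
      c * ∑ i ∈ s, |a i| ≤ ‖∑ i ∈ s, a i • y i‖ ∧ ‖∑ i ∈ s, a i • y i‖ ≤ C * ∑ i ∈ s, |a i| := by
  obtain ⟨c, C, hc, hC, hb⟩ := h
  refine ⟨c, C, hc, hC, fun s a => ?_⟩
  obtain ⟨n, hn⟩ : ∃ n, ∀ i ∈ s, i < n :=
    ⟨(s.sup id) + 1, fun i hi => Nat.lt_succ_of_le (Finset.le_sup (f := id) hi)⟩
  have hsub : s ⊆ Finset.range n := fun i hi => Finset.mem_range.mpr (hn i hi)
  have h1 : (∑ i : Fin n, (if (i : ℕ) ∈ s then a (i : ℕ) else 0) • y (i : ℕ))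
      = ∑ i ∈ s, a i • y i := by
    rw [Fin.sum_univ_eq_sum_range (fun j => (if j ∈ s then a j else 0) • y j) n]
    rw [← Finset.sum_subset hsub (fun i _ hi => by simp [hi])]
    exact Finset.sum_congr rfl fun i hi => by simp [hi]
  have h2 : (∑ i : Fin n, |if (i : ℕ) ∈ s then a (i : ℕ) else 0|) = ∑ i ∈ s, |a i| := by
    rw [Fin.sum_univ_eq_sum_range (fun j => |if j ∈ s then a j else 0|) n]
    rw [← Finset.sum_subset hsub (fun i _ hi => by simp [hi])]
    exact Finset.sum_congr rfl fun i hi => by simp [hi]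
  have := hb n (fun i => if (i : ℕ) ∈ s then a (i : ℕ) else 0)
  rw [h1, h2] at this
  exact this

/-- Terms of an ℓ¹-basis sequence are separated. -/
lemma IsEquivL1Basis.exists_sep {y : ℕ → X} (h : IsEquivL1Basis y) :
    ∃ c : ℝ, 0 < c ∧ ∀ i j, i ≠ j → 2 * c ≤ ‖y i - y j‖ := by
  obtain ⟨c, C, hc, hC, hb⟩ := h.finset
  refine ⟨c, hc, fun i j hij => ?_⟩
  have := (hb {i, j} (fun t => if t = i then 1 else -1)).1
  rw [Finset.sum_pair hij, Finset.sum_pair hij] at this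
  simp only [if_pos rfl, if_neg (fun hji : j = i => hij hji.symm), ite_true] at this
  rw [one_smul, neg_one_smul, ← sub_eq_add_neg] at this
  norm_num at this
  linarith

lemma IsEquivL1Basis.injective {y : ℕ → X} (h : IsEquivL1Basis y) : Function.Injective y := by
  obtain ⟨c, hc, hsep⟩ := h.exists_sep
  intro i j hij
  by_contra hne
  have := hsep i j hne
  rw [hij, sub_self, norm_zero] at this
  linarith

lemma IsEquivL1Basis.not_weaklyCauchy {y : ℕ → X} (h : IsEquivL1Basis y) :
    ¬ ∀ f : X →L[ℝ] ℝ, ∃ L : ℝ, Tendsto (fun n => f (y n)) atTop (𝓝 L) := by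
  obtain ⟨c, C, hc, hC, hb⟩ := h.finset
  have hli : LinearIndependent ℝ y := by
    rw [linearIndependent_iff']
    intro s g hg i hi
    have h1 := (hb s g).1
    rw [hg, norm_zero] at h1
    have h2 : ∑ j ∈ s, |g j| ≤ 0 := by nlinarith [Finset.sum_nonneg (fun j (_ : j ∈ s) => abs_nonneg (g j))]
    have h3 : ∑ j ∈ s, |g j| = 0 :=
      le_antisymm h2 (Finset.sum_nonneg fun j _ => abs_nonneg _)
    have := (Finset.sum_eq_zero_iff_of_nonneg (fun j _ => abs_nonneg (g j))).1 h3 i hi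
    exact abs_eq_zero.mp this
  set V := Submodule.span ℝ (Set.range y) with hV
  set ψ : (ℕ →₀ ℝ) →ₗ[ℝ] ℝ := Finsupp.linearCombination ℝ (fun n => (-1 : ℝ) ^ n) with hψ
  set g0 : V →ₗ[ℝ] ℝ := ψ.comp hli.repr with hg0
  have hbound : ∀ v : V, ‖g0 v‖ ≤ c⁻¹ * ‖v‖ := by
    intro v
    set a := hli.repr v with ha
    have hv : Finsupp.linearCombination ℝ y a = (v : X) := hli.linearCombination_repr v
    have e1 : g0 v = ∑ n ∈ a.support, a n * (-1 : ℝ) ^ n := by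
      simp [hg0, hψ, Finsupp.linearCombination_apply, Finsupp.sum, smul_eq_mul, ← ha]
    have e2 : (v : X) = ∑ n ∈ a.support, a n • y n := by
      rw [← hv, Finsupp.linearCombination_apply, Finsupp.sum]
    have e3 : ‖g0 v‖ ≤ ∑ n ∈ a.support, |a n| := by
      rw [e1]
      refine le_trans (norm_sum_le _ _) (Finset.sum_le_sum fun n _ => ?_)
      rw [Real.norm_eq_abs, abs_mul, abs_pow, abs_neg, abs_one, one_pow, mul_one]
    have e4 : c * ∑ n ∈ a.support, |a n| ≤ ‖(v : X)‖ := by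
      rw [e2]; exact (hb a.support a).1
    have e5 : ‖(v : X)‖ = ‖v‖ := rfl
    rw [e5] at e4
    have := mul_le_mul_of_nonneg_left e4 (inv_nonneg.mpr hc.le)
    rw [← mul_assoc, inv_mul_cancel₀ hc.ne', one_mul] at this
    exact e3.trans this
  set g1 : V →L[ℝ] ℝ := g0.mkContinuous c⁻¹ hbound with hg1
  obtain ⟨g, hg_eq, -⟩ := exists_extension_norm_eq V g1
  have hval : ∀ n, g (y n) = (-1 : ℝ) ^ n := by
    intro n
    have hmem : y n ∈ V := Submodule.subset_span ⟨n, rfl⟩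
    have h1 := hg_eq ⟨y n, hmem⟩
    rw [h1]
    have h2 : hli.repr ⟨y n, hmem⟩ = Finsupp.single n 1 := hli.repr_eq_single n _ rfl
    show g0 ⟨y n, hmem⟩ = _
    rw [hg0]
    simp [h2, hψ, Finsupp.linearCombination_single]
  intro hWC
  obtain ⟨L, hL⟩ := hWC g
  have hL' : Tendsto (fun n : ℕ => (-1 : ℝ) ^ n) atTop (𝓝 L) := by
    simpa only [hval] using hL
  have ht2 : Tendsto (fun k : ℕ => 2 * k) atTop atTop :=
    tendsto_atTop_mono (fun k => by simp only [id_eq]; omega) tendsto_id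
  have ht2' : Tendsto (fun k : ℕ => 2 * k + 1) atTop atTop :=
    tendsto_atTop_mono (fun k => by simp only [id_eq]; omega) tendsto_id
  have h1 : Tendsto (fun k : ℕ => ((-1 : ℝ)) ^ (2 * k)) atTop (𝓝 L) := hL'.comp ht2
  have h2 : Tendsto (fun k : ℕ => ((-1 : ℝ)) ^ (2 * k + 1)) atTop (𝓝 L) := hL'.comp ht2'
  have e1 : (fun k : ℕ => ((-1 : ℝ)) ^ (2 * k)) = fun _ => (1 : ℝ) := by
    funext k; rw [pow_mul]; norm_num
  have e2 : (fun k : ℕ => ((-1 : ℝ)) ^ (2 * k + 1)) = fun _ => (-1 : ℝ) := by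
    funext k; rw [pow_succ, pow_mul]; norm_num
  rw [e1] at h1; rw [e2] at h2
  have : (1 : ℝ) = L := tendsto_nhds_unique tendsto_const_nhds h1
  have : (-1 : ℝ) = L := tendsto_nhds_unique tendsto_const_nhds h2
  linarith

lemma weaklyConvergesTo_iff {x : ℕ → X} {l : X} :
    WeaklyConvergesTo x l ↔ ∀ f : X →L[ℝ] ℝ, Tendsto (fun n => f (x n)) atTop (𝓝 (f l)) := by
  have hinj : Function.Injective ((topDualPairing ℝ X).flip) := by
    intro a b hab
    rw [NormedSpace.eq_iff_forall_dual_eq ℝ]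
    intro f
    have := congrFun (congrArg (fun (p : (X →L[ℝ] ℝ) →ₗ[ℝ] ℝ) => (p : (X →L[ℝ] ℝ) → ℝ)) hab) f
    exact this
  exact WeakBilin.tendsto_iff_forall_eval_tendsto _ hinj

lemma schur_tendsto_of_weaklyCauchy [CompleteSpace X]
    (hS : ∀ (x : ℕ → X) (l : X), WeaklyConvergesTo x l → Tendsto x atTop (𝓝 l))
    {y : ℕ → X} (hy : ∀ f : X →L[ℝ] ℝ, ∃ L : ℝ, Tendsto (fun n => f (y n)) atTop (𝓝 L)) :
    ∃ l : X, Tendsto y atTop (𝓝 l) := by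
  suffices hC : CauchySeq y from cauchySeq_tendsto_of_complete hC
  by_contra hnc
  rw [Metric.cauchySeq_iff] at hnc
  push_neg at hnc
  obtain ⟨ε, hε, hbad⟩ := hnc
  choose m hm n hn hd using hbad
  set z : ℕ → X := fun k => y (m k) - y (n k) with hz
  have hmt : Tendsto m atTop atTop := tendsto_atTop_mono hm tendsto_id
  have hnt : Tendsto n atTop atTop := tendsto_atTop_mono hn tendsto_id
  have hwz : WeaklyConvergesTo z 0 := by
    rw [weaklyConvergesTo_iff]
    intro f
    obtain ⟨L, hL⟩ := hy f
    have h1 : Tendsto (fun k => f (y (m k))) atTop (𝓝 L) := hL.comp hmt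
    have h2 : Tendsto (fun k => f (y (n k))) atTop (𝓝 L) := hL.comp hnt
    have := h1.sub h2
    rw [sub_self] at this
    simpa [hz, map_sub] using this
  have := hS z 0 hwz
  have hev : ∀ᶠ k in atTop, dist (z k) 0 < ε := (Metric.tendsto_nhds.mp this) ε hε
  obtain ⟨k, hk⟩ := hev.exists
  rw [dist_zero_right, hz] at hk
  have := hd k
  rw [dist_eq_norm] at this
  exact absurd hk (not_lt.mpr this)


end Proof

namespace RosAux

variable {S : Type*} (A B : ℕ → Set S)

/-- There is a point of `C` lying in infinitely many `A n` and infinitely many `B n`, `n ∈ M`. -/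
def OscIn (C : Set S) (M : Set ℕ) : Prop :=
  ∃ g ∈ C, {n | n ∈ M ∧ g ∈ A n}.Infinite ∧ {n | n ∈ M ∧ g ∈ B n}.Infinite

/-- Every infinite subset of `M` admits an oscillating point of `C`. -/
def Rich (C : Set S) (M : Set ℕ) : Prop :=
  ∀ M' ⊆ M, M'.Infinite → OscIn A B C M'

variable {A B}

lemma OscIn.of_diff_finite {C : Set S} {N M : Set ℕ} (h : OscIn A B C N)
    (hfin : (N \ M).Finite) : OscIn A B C M := by
  obtain ⟨g, hg, hA, hB⟩ := h
  refine ⟨g, hg, ?_, ?_⟩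
  · exact ((hA.diff hfin).mono (fun n hn => ⟨by_contra fun hM => hn.2 ⟨hn.1.1, hM⟩, hn.1.2⟩))
  · exact ((hB.diff hfin).mono (fun n hn => ⟨by_contra fun hM => hn.2 ⟨hn.1.1, hM⟩, hn.1.2⟩))

lemma Rich.mono {C : Set S} {M M' : Set ℕ} (h : Rich A B C M) (hM : M' ⊆ M) :
    Rich A B C M' := fun M'' h2 h3 => h M'' (h2.trans hM) h3

lemma Rich.mono_cell {C C' : Set S} {M : Set ℕ} (h : Rich A B C M) (hC : C ⊆ C') :
    Rich A B C' M := fun M'' h2 h3 => by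
  obtain ⟨g, hg, hA, hB⟩ := h M'' h2 h3
  exact ⟨g, hC hg, hA, hB⟩

/-- The key extraction step: given finitely many cells, all rich relative to `M`, one can find
`n ∈ M` and an infinite `M' ⊆ M` beyond `n` such that all cells refined by `A n` resp. `B n`
remain rich. -/
lemma step {I : Type*} [Finite I] (C : I → Set S) (M : Set ℕ)
    (hM : M.Infinite) (hrich : ∀ i, Rich A B (C i) M) :
    ∃ n ∈ M, ∃ M', M' ⊆ M ∧ M'.Infinite ∧ (∀ m ∈ M', n < m) ∧
      ∀ (i : I) (b : Bool), Rich A B (C i ∩ (cond b (A n) (B n))) M' := by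
  by_contra hfail
  -- Preliminary: a single "failed" extraction step.
  have key : ∀ M₀ : Set ℕ, M₀ ⊆ M → M₀.Infinite →
      ∃ n ∈ M₀, ∃ M₁, M₁ ⊆ M₀ ∧ M₁.Infinite ∧ (∀ m ∈ M₁, n < m) ∧
        ∃ i b, ¬ OscIn A B (C i ∩ (cond b (A n) (B n))) M₁ := by
    intro M₀ hsub hinf
    obtain ⟨n, hn⟩ := hinf.nonempty
    set M' : Set ℕ := {m ∈ M₀ | n < m} with hM'def
    have hM'sub : M' ⊆ M₀ := fun m hm => hm.1
    have hM'inf : M'.Infinite := by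
      refine (hinf.diff (Set.finite_Iic n)).mono (fun m hm => ⟨hm.1, ?_⟩)
      simpa using hm.2
    have hM'bd : ∀ m ∈ M', n < m := fun m hm => hm.2
    have hnR : ¬ ∀ (i : I) (b : Bool), Rich A B (C i ∩ (cond b (A n) (B n))) M' := by
      intro hall
      exact hfail ⟨n, hsub hn, M', hM'sub.trans hsub, hM'inf, hM'bd, hall⟩
    rw [not_forall] at hnR
    obtain ⟨i, hi⟩ := hnR
    rw [not_forall] at hi
    obtain ⟨b, hb⟩ := hi
    rw [Rich, not_forall] at hb
    obtain ⟨M₁, h1⟩ := hb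
    push_neg at h1
    obtain ⟨h1a, h1b, h1c⟩ := h1
    exact ⟨n, hn, M₁, h1a.trans hM'sub, h1b, fun m hm => hM'bd m (h1a hm), i, b, h1c⟩
  -- Build the diagonal sequence of failed steps.
  classical
  have exT : ∀ p : {p : Set ℕ // p ⊆ M ∧ p.Infinite},
      ∃ q : ℕ × {p : Set ℕ // p ⊆ M ∧ p.Infinite} × I × Bool,
        q.1 ∈ p.1 ∧ q.2.1.1 ⊆ p.1 ∧ (∀ m ∈ q.2.1.1, q.1 < m) ∧
          ¬ OscIn A B (C q.2.2.1 ∩ (cond q.2.2.2 (A q.1) (B q.1))) q.2.1.1 := by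
    rintro ⟨M₀, hsub, hinf⟩
    obtain ⟨n, hn, M₁, h1, h2, h3, i, b, h4⟩ := key M₀ hsub hinf
    exact ⟨⟨n, ⟨M₁, h1.trans hsub, h2⟩, i, b⟩, hn, h1, h3, h4⟩
  choose F hF1 hF2 hF3 hF4 using exT
  set st : ℕ → ℕ × {p : Set ℕ // p ⊆ M ∧ p.Infinite} × I × Bool :=
    fun k => Nat.rec (F ⟨M, le_refl M, hM⟩)
      (fun _ t => F t.2.1) k with hst
  set nn : ℕ → ℕ := fun k => (st k).1 with hnn
  set MM : ℕ → Set ℕ := fun k => (st k).2.1.1 with hMM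
  set tg : ℕ → I × Bool := fun k => (st k).2.2 with htg
  have hstF : ∀ k, ∃ p, st k = F p := by
    intro k
    cases k with
    | zero => exact ⟨⟨M, le_refl M, hM⟩, rfl⟩
    | succ k => exact ⟨(st k).2.1, rfl⟩
  have hMMinf : ∀ k, (MM k).Infinite := fun k => (st k).2.1.2.2
  have hMMM : ∀ k, MM k ⊆ M := fun k => (st k).2.1.2.1
  have hbd : ∀ k, ∀ m ∈ MM k, nn k < m := by
    intro k
    obtain ⟨p, hp⟩ := hstF k
    show ∀ m ∈ (st k).2.1.1, (st k).1 < m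
    rw [hp]; exact hF3 p
  have hnosc : ∀ k, ¬ OscIn A B (C (tg k).1 ∩ (cond (tg k).2 (A (nn k)) (B (nn k)))) (MM k) :=
    by
    intro k
    obtain ⟨p, hp⟩ := hstF k
    show ¬ OscIn A B (C (st k).2.2.1 ∩ cond (st k).2.2.2 (A (st k).1) (B (st k).1)) (st k).2.1.1
    rw [hp]; exact hF4 p
  have hmem : ∀ k, nn (k + 1) ∈ MM k := fun k => hF1 (st k).2.1
  have hsub : ∀ k, MM (k + 1) ⊆ MM k := fun k => hF2 (st k).2.1
  have hsub' : ∀ j k, j ≤ k → MM k ⊆ MM j := by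
    intro j k hjk
    induction k with
    | zero => cases Nat.le_zero.mp hjk; exact le_refl _
    | succ k ih =>
      rcases Nat.lt_or_ge j (k+1) with h | h
      · exact (hsub k).trans (ih (Nat.lt_succ_iff.mp h))
      · cases Nat.le_antisymm hjk h; exact le_refl _
  have hnnmono : StrictMono nn := by
    apply strictMono_nat_of_lt_succ
    intro k
    exact hbd k _ (hmem k)
  -- pigeonhole on the tags
  obtain ⟨p, hp⟩ := Finite.exists_infinite_fiber tg
  set J : Set ℕ := tg ⁻¹' {p} with hJ
  have hJinf : J.Infinite := Set.infinite_coe_iff.mp hp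
  set N : Set ℕ := nn '' J with hN
  have hNinf : N.Infinite := hJinf.image (hnnmono.injective.injOn)
  have hNM : N ⊆ M := by
    rintro _ ⟨j, -, rfl⟩
    rcases j with _ | j
    · obtain ⟨p, hp⟩ := hstF 0
      have : nn 0 ∈ p.1 := by show (st 0).1 ∈ p.1; rw [hp]; exact hF1 p
      exact p.2.1 this
    · exact hMMM j (hmem j)
  obtain ⟨i, b⟩ := p
  obtain ⟨g, hgC, hgA, hgB⟩ := hrich i N hNM hNinf
  have hDinf : {n | n ∈ N ∧ g ∈ cond b (A n) (B n)}.Infinite := by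
    cases b
    · exact hgB
    · exact hgA
  obtain ⟨n₀, hn₀⟩ := hDinf.nonempty
  obtain ⟨⟨j, hjJ, rfl⟩, hgD⟩ := hn₀
  have htail : ∀ t, j < t → nn t ∈ MM j := by
    intro t ht
    rcases t with _ | t
    · omega
    · exact hsub' j t (Nat.lt_succ_iff.mp ht) (hmem t)
  have hinfA : {n | n ∈ MM j ∧ g ∈ A n}.Infinite := by
    refine (hgA.diff ((Set.finite_le_nat j).image nn)).mono ?_
    rintro n ⟨⟨hnN, hgA'⟩, hnot⟩
    obtain ⟨t, htJ, rfl⟩ := hnN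
    have htj : j < t := by
      by_contra hle
      exact hnot ⟨t, by simp only [Set.mem_setOf_eq]; omega, rfl⟩
    exact ⟨htail t htj, hgA'⟩
  have hinfB : {n | n ∈ MM j ∧ g ∈ B n}.Infinite := by
    refine (hgB.diff ((Set.finite_le_nat j).image nn)).mono ?_
    rintro n ⟨⟨hnN, hgB'⟩, hnot⟩
    obtain ⟨t, htJ, rfl⟩ := hnN
    have htj : j < t := by
      by_contra hle
      exact hnot ⟨t, by simp only [Set.mem_setOf_eq]; omega, rfl⟩
    exact ⟨htail t htj, hgB'⟩
  have hosc : OscIn A B (C i ∩ cond b (A (nn j)) (B (nn j))) (MM j) :=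
    ⟨g, ⟨hgC, hgD⟩, hinfA, hinfB⟩
  have htg : tg j = (i, b) := hjJ
  have := hnosc j
  rw [htg] at this
  exact this hosc

/-- The cell determined by the first `k` choices. -/
def cell (A B : ℕ → Set S) (n : ℕ → ℕ) (ε : ℕ → Bool) (k : ℕ) : Set S :=
  ⋂ i ∈ Finset.range k, cond (ε i) (A (n i)) (B (n i))

lemma cell_congr {n n' : ℕ → ℕ} {k : ℕ} (h : ∀ i < k, n i = n' i) (ε : ℕ → Bool) :
    cell A B n ε k = cell A B n' ε k := by
  unfold cell
  apply Set.iInter₂_congr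
  intro i hi
  rw [h i (Finset.mem_range.mp hi)]

lemma cell_eq_fin (n : ℕ → ℕ) (ε : ℕ → Bool) (k : ℕ) :
    cell A B n ε k = ⋂ i : Fin k, cond (ε i.1) (A (n i.1)) (B (n i.1)) := by
  ext g
  simp only [cell, Set.mem_iInter, Finset.mem_range]
  exact ⟨fun h i => h i.1 i.2, fun h i hi => h ⟨i, hi⟩⟩

/-- Fusion: from a rich starting set, extract a strictly monotone sequence all of whose
"independence cells" are nonempty. -/
lemma fusion (M0 : Set ℕ) (h0 : M0.Infinite) (hR : Rich A B Set.univ M0) :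
    ∃ N : ℕ → ℕ, StrictMono N ∧ ∀ (k : ℕ) (ε : ℕ → Bool),
      (⋂ i ∈ Finset.range k, cond (ε i) (A (N i)) (B (N i))).Nonempty := by
  classical
  set Inv : ℕ → (ℕ → ℕ) × Set ℕ → Prop := fun k p =>
    p.2 ⊆ M0 ∧ p.2.Infinite ∧ (∀ m ∈ p.2, ∀ i < k, p.1 i < m) ∧
    (∀ i j, i < j → j < k → p.1 i < p.1 j) ∧
    (∀ ε : ℕ → Bool, Rich A B (cell A B p.1 ε k) p.2) with hInv
  have base : Inv 0 ((fun _ => 0), M0) := by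
    refine ⟨le_refl _, h0, fun m _ i hi => absurd hi (Nat.not_lt_zero i),
      fun i j _ hj => absurd hj (Nat.not_lt_zero j), fun ε => ?_⟩
    have : cell A B (fun _ => 0) ε 0 = Set.univ := by
      simp [cell]
    rw [this]; exact hR
  have hstep : ∀ k (p : {p // Inv k p}), ∃ q : {q // Inv (k+1) q},
      ∀ i, i < k → q.1.1 i = p.1.1 i := by
    rintro k ⟨⟨n, M⟩, hsub, hinf, hbd, hmono, hrich⟩
    have hrichF : ∀ ε' : Fin k → Bool,
        Rich A B (⋂ i : Fin k, cond (ε' i) (A (n i.1)) (B (n i.1))) M := by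
      intro ε'
      have := hrich (fun i => if h : i < k then ε' ⟨i, h⟩ else true)
      rw [cell_eq_fin] at this
      convert this using 3 with i
      simp [i.2]
    obtain ⟨n', hn'M, M', hM'sub, hM'inf, hM'bd, hrich'⟩ :=
      step (I := Fin k → Bool)
        (fun ε' => ⋂ i : Fin k, cond (ε' i) (A (n i.1)) (B (n i.1))) M hinf hrichF
    refine ⟨⟨⟨Function.update n k n', M'⟩, hM'sub.trans hsub, hM'inf, ?_, ?_, ?_⟩, ?_⟩
    · intro m hm i hi
      show Function.update n k n' i < m
      rcases Nat.lt_or_ge i k with h | h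
      · rw [Function.update_of_ne (by omega : i ≠ k)]
        exact hbd m (hM'sub hm) i h
      · have : i = k := by omega
        subst this
        rw [Function.update_self]
        exact hM'bd m hm
    · intro i j hij hj
      show Function.update n k n' i < Function.update n k n' j
      rcases Nat.lt_or_ge j k with h | h
      · rw [Function.update_of_ne (by omega : i ≠ k), Function.update_of_ne (by omega : j ≠ k)]
        exact hmono i j hij h
      · have : j = k := by omega
        subst this
        rw [Function.update_of_ne (by omega : i ≠ j), Function.update_self]
        exact hbd n' hn'M i hij
    · intro ε
      show Rich A B (cell A B (Function.update n k n') ε (k+1)) M'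
      have hc : cell A B (Function.update n k n') ε (k+1)
          = (⋂ i : Fin k, cond (ε i.1) (A (n i.1)) (B (n i.1))) ∩
            cond (ε k) (A n') (B n') := by
        rw [show cell A B (Function.update n k n') ε (k+1)
            = cell A B n ε k ∩ cond (ε k) (A n') (B n') from ?_, cell_eq_fin]
        unfold cell
        rw [Finset.range_add_one, Finset.set_biInter_insert, Function.update_self, Set.inter_comm]
        congr 1
        apply Set.iInter₂_congr
        intro i hi
        rw [Function.update_of_ne (by have := Finset.mem_range.mp hi; omega)]
      rw [hc]
      exact hrich' (fun i => ε i.1) (ε k)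
    · intro i hi
      show Function.update n k n' i = n i
      exact Function.update_of_ne (by omega) _ _
  choose Fst hFst using hstep
  set states : ∀ k, {p // Inv k p} := fun k => Nat.rec ⟨((fun _ => 0), M0), base⟩ Fst k
    with hstates
  have hagree : ∀ k i, i < k → (states (k+1)).1.1 i = (states k).1.1 i :=
    fun k => hFst k (states k)
  set N : ℕ → ℕ := fun k => (states (k+1)).1.1 k with hN
  have hstable : ∀ j k, k < j → (states j).1.1 k = N k := by
    intro j k hkj
    induction j, hkj using Nat.le_induction with
    | base => rfl
    | succ j hkj ih => rw [hagree j k (by omega)]; exact ih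
  have hmonoN : StrictMono N := by
    apply strictMono_nat_of_lt_succ
    intro k
    have := (states (k+2)).2.2.2.2.1 k (k+1) (by omega) (by omega)
    rwa [hstable (k+2) k (by omega), hstable (k+2) (k+1) (by omega)] at this
  refine ⟨N, hmonoN, fun k ε => ?_⟩
  obtain ⟨hsub, hinf, -, -, hrich⟩ := (states k).2
  obtain ⟨g, hg, -, -⟩ := hrich ε _ (le_refl _) hinf
  have : cell A B (states k).1.1 ε k = cell A B N ε k :=
    cell_congr (fun i hi => hstable k i hi) ε
  rw [this] at hg
  exact ⟨g, hg⟩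

end RosAux


section Proof2

variable {X : Type*} [NormedAddCommGroup X] [NormedSpace ℝ X]

lemma l1_of_indep (x : ℕ → X) (K : ℝ) (hK : ∀ n, ‖x n‖ ≤ K) {r s : ℝ} (hrs : r < s)
    (N : ℕ → ℕ)
    (hind : ∀ (k : ℕ) (ε : ℕ → Bool),
      (⋂ i ∈ Finset.range k,
        cond (ε i) {g : X →L[ℝ] ℝ | ‖g‖ ≤ 1 ∧ g (x (N i)) ≤ r}
          {g : X →L[ℝ] ℝ | ‖g‖ ≤ 1 ∧ s ≤ g (x (N i))}).Nonempty) :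
    IsEquivL1Basis (x ∘ N) := by
  have hK0 : (0:ℝ) ≤ K := le_trans (norm_nonneg (x 0)) (hK 0)
  refine ⟨(s - r)/2, K + 1, by linarith, by linarith, fun n a => ?_⟩
  have habs : (0:ℝ) ≤ ∑ i : Fin n, |a i| := Finset.sum_nonneg fun i _ => abs_nonneg _
  simp only [Function.comp_apply]
  constructor
  · -- lower bound
    rcases Nat.eq_zero_or_pos n with hn | hn
    · subst hn
      simp
    set a' : ℕ → ℝ := fun i => if h : i < n then a ⟨i, h⟩ else 0 with ha'
    obtain ⟨g₁, hg₁⟩ := hind n (fun i => decide (a' i < 0))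
    obtain ⟨g₂, hg₂⟩ := hind n (fun i => decide (0 ≤ a' i))
    have hg₁' : ∀ i : Fin n, g₁ ∈
        cond (decide (a' i.1 < 0)) {g : X →L[ℝ] ℝ | ‖g‖ ≤ 1 ∧ g (x (N i.1)) ≤ r}
          {g : X →L[ℝ] ℝ | ‖g‖ ≤ 1 ∧ s ≤ g (x (N i.1))} := by
      intro i
      exact Set.mem_iInter₂.mp hg₁ i.1 (Finset.mem_range.mpr i.2)
    have hg₂' : ∀ i : Fin n, g₂ ∈
        cond (decide (0 ≤ a' i.1)) {g : X →L[ℝ] ℝ | ‖g‖ ≤ 1 ∧ g (x (N i.1)) ≤ r}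
          {g : X →L[ℝ] ℝ | ‖g‖ ≤ 1 ∧ s ≤ g (x (N i.1))} := by
      intro i
      exact Set.mem_iInter₂.mp hg₂ i.1 (Finset.mem_range.mpr i.2)
    have ha'eq : ∀ i : Fin n, a' i.1 = a i := by
      intro i
      simp only [ha', i.2, dif_pos]
    set h := g₁ - g₂ with hh
    have key : ∀ i : Fin n, (s - r) * |a i| ≤ a i * (h (x (N i.1))) := by
      intro i
      rcases le_or_gt 0 (a i) with hai | hai
      · have h1 := hg₁' i
        have h2 := hg₂' i
        rw [ha'eq i] at h1 h2
        rw [decide_eq_false (not_lt.mpr hai), cond_false] at h1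
        rw [decide_eq_true hai, cond_true] at h2
        have hv : s - r ≤ h (x (N i.1)) := by
          have := h1.2
          have := h2.2
          simp only [hh, ContinuousLinearMap.sub_apply]
          linarith
        have := mul_le_mul_of_nonneg_left hv hai
        rw [abs_of_nonneg hai]
        linarith
      · have h1 := hg₁' i
        have h2 := hg₂' i
        rw [ha'eq i] at h1 h2
        rw [decide_eq_true hai, cond_true] at h1
        rw [decide_eq_false (not_le.mpr hai), cond_false] at h2
        have hv : h (x (N i.1)) ≤ r - s := by
          have := h1.2
          have := h2.2
          simp only [hh, ContinuousLinearMap.sub_apply]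
          linarith
        have := mul_le_mul_of_nonpos_left hv (le_of_lt hai)
        rw [abs_of_neg hai]
        nlinarith
    have hsum : (s - r) * ∑ i : Fin n, |a i| ≤ h (∑ i : Fin n, a i • x (N i.1)) := by
      rw [Finset.mul_sum, map_sum]
      refine Finset.sum_le_sum fun i _ => ?_
      rw [map_smul, smul_eq_mul]
      exact key i
    have hnorm1 : ‖g₁‖ ≤ 1 := by
      have h1 := hg₁' ⟨0, hn⟩
      cases hdec : decide (a' ((⟨0, hn⟩ : Fin n) : ℕ) < 0) <;> rw [hdec] at h1
      · exact h1.1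
      · exact h1.1
    have hnorm2 : ‖g₂‖ ≤ 1 := by
      have h2 := hg₂' ⟨0, hn⟩
      cases hdec : decide (0 ≤ a' ((⟨0, hn⟩ : Fin n) : ℕ)) <;> rw [hdec] at h2
      · exact h2.1
      · exact h2.1
    have hnorm : ‖h‖ ≤ 2 := by
      rw [hh]
      calc ‖g₁ - g₂‖ ≤ ‖g₁‖ + ‖g₂‖ := norm_sub_le _ _
        _ ≤ 2 := by linarith
    set v := ∑ i : Fin n, a i • x (N (i : ℕ)) with hv
    have hle : h v ≤ 2 * ‖v‖ := by
      calc h v ≤ |h v| := le_abs_self _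
        _ = ‖h v‖ := (Real.norm_eq_abs _).symm
        _ ≤ ‖h‖ * ‖v‖ := h.le_opNorm v
        _ ≤ 2 * ‖v‖ := mul_le_mul_of_nonneg_right hnorm (norm_nonneg v)
    have := hsum.trans hle
    linarith
  · -- upper bound
    refine le_trans (norm_sum_le _ _) ?_
    have : ∀ i : Fin n, ‖a i • x (N i.1)‖ ≤ |a i| * K := by
      intro i
      rw [norm_smul, Real.norm_eq_abs]
      exact mul_le_mul_of_nonneg_left (hK (N i.1)) (abs_nonneg _)
    refine le_trans (Finset.sum_le_sum fun i _ => this i) ?_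
    rw [← Finset.sum_mul]
    nlinarith


theorem rosenthal_extract (x : ℕ → X) (K : ℝ) (hK : ∀ n, ‖x n‖ ≤ K)
    (hno : ∀ φ : ℕ → ℕ, StrictMono φ → ¬ IsEquivL1Basis (x ∘ φ)) :
    ∃ φ : ℕ → ℕ, StrictMono φ ∧
      ∀ f : X →L[ℝ] ℝ, ∃ L : ℝ, Tendsto (fun k => f (x (φ k))) atTop (𝓝 L) := by
  classical
  set Aq : ℚ → ℕ → Set (X →L[ℝ] ℝ) := fun r n => {g | ‖g‖ ≤ 1 ∧ g (x n) ≤ (r:ℝ)} with hAq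
  set Bq : ℚ → ℕ → Set (X →L[ℝ] ℝ) := fun s n => {g | ‖g‖ ≤ 1 ∧ (s:ℝ) ≤ g (x n)} with hBq
  have main : ∀ r s : ℚ, (r:ℝ) < (s:ℝ) → ∀ M : Set ℕ, M.Infinite →
      ∃ M', M' ⊆ M ∧ M'.Infinite ∧ ¬ RosAux.OscIn (Aq r) (Bq s) Set.univ M' := by
    intro r s hrs M hM
    by_contra hfail
    push_neg at hfail
    have hR : RosAux.Rich (Aq r) (Bq s) Set.univ M := fun M' h1 h2 => hfail M' h1 h2
    obtain ⟨N, hN, hcells⟩ := RosAux.fusion (A := Aq r) (B := Bq s) M hM hR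
    exact hno N hN (l1_of_indep x K hK (show (r:ℝ) < (s:ℝ) from hrs) N hcells)
  set e : ℕ → ℚ × ℚ := fun k => (Denumerable.eqv (ℚ × ℚ)).symm k with he
  have esurj : ∀ p : ℚ × ℚ, ∃ k, e k = p :=
    fun p => ⟨(Denumerable.eqv (ℚ × ℚ)) p, by simp [he]⟩
  have hstep : ∀ (M : {M : Set ℕ // M.Infinite}) (k : ℕ),
      ∃ M' : {M : Set ℕ // M.Infinite}, M'.1 ⊆ M.1 ∧
        (((e k).1 : ℝ) < ((e k).2 : ℝ) →
          ¬ RosAux.OscIn (Aq (e k).1) (Bq (e k).2) Set.univ M'.1) := by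
    rintro ⟨M, hM⟩ k
    by_cases h : ((e k).1 : ℝ) < ((e k).2 : ℝ)
    · obtain ⟨M', h1, h2, h3⟩ := main (e k).1 (e k).2 h M hM
      exact ⟨⟨M', h2⟩, h1, fun _ => h3⟩
    · exact ⟨⟨M, hM⟩, le_refl _, fun h' => absurd h' h⟩
  choose G hG1 hG2 using hstep
  set Ms : ℕ → {M : Set ℕ // M.Infinite} :=
    fun k => Nat.rec ⟨Set.univ, Set.infinite_univ⟩ (fun k M => G M k) k with hMs
  have hMsub : ∀ k, (Ms (k+1)).1 ⊆ (Ms k).1 := fun k => hG1 (Ms k) k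
  have hMmono : ∀ j k, j ≤ k → (Ms k).1 ⊆ (Ms j).1 := by
    intro j k hjk
    induction k with
    | zero => cases Nat.le_zero.mp hjk; exact le_refl _
    | succ k ih =>
      rcases Nat.lt_or_ge j (k+1) with h | h
      · exact (hMsub k).trans (ih (Nat.lt_succ_iff.mp h))
      · cases Nat.le_antisymm hjk h; exact le_refl _
  have hMosc : ∀ k, (((e k).1 : ℝ) < ((e k).2 : ℝ)) →
      ¬ RosAux.OscIn (Aq (e k).1) (Bq (e k).2) Set.univ (Ms (k+1)).1 :=
    fun k => hG2 (Ms k) k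
  have hdiag : ∀ (k : ℕ) (b : ℕ), ∃ m ∈ (Ms k).1, b < m := fun k b => (Ms k).2.exists_gt b
  choose D hD1 hD2 using hdiag
  set φ : ℕ → ℕ := fun k => Nat.rec (D 0 0) (fun k m => D (k+1) m) k with hφ
  have hφmem : ∀ k, φ k ∈ (Ms k).1 := by
    intro k
    cases k with
    | zero => exact hD1 0 0
    | succ k => exact hD1 (k+1) (φ k)
  have hφmono : StrictMono φ := strictMono_nat_of_lt_succ (fun k => hD2 (k+1) (φ k))
  have hφtail : ∀ k j, k ≤ j → φ j ∈ (Ms k).1 := fun k j hkj => hMmono k j hkj (hφmem j)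
  have hkey : ∀ g : X →L[ℝ] ℝ, ‖g‖ ≤ 1 → ∀ r s : ℚ, (r:ℝ) < (s:ℝ) →
      ¬ ({j | g (x (φ j)) ≤ (r:ℝ)}.Infinite ∧ {j | (s:ℝ) ≤ g (x (φ j))}.Infinite) := by
    rintro g hg r s hrs ⟨hA, hB⟩
    obtain ⟨k0, hk0⟩ := esurj (r, s)
    have hosc : RosAux.OscIn (Aq r) (Bq s) Set.univ (Ms (k0+1)).1 := by
      refine ⟨g, Set.mem_univ g, ?_, ?_⟩
      · refine ((hA.diff (Set.finite_le_nat k0)).image hφmono.injective.injOn).mono ?_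
        rintro n ⟨j, ⟨hj1, hj2⟩, rfl⟩
        have hj2' : k0 + 1 ≤ j := by
          simp only [Set.mem_setOf_eq] at hj2
          omega
        exact ⟨hφtail (k0+1) j hj2', hg, hj1⟩
      · refine ((hB.diff (Set.finite_le_nat k0)).image hφmono.injective.injOn).mono ?_
        rintro n ⟨j, ⟨hj1, hj2⟩, rfl⟩
        have hj2' : k0 + 1 ≤ j := by
          simp only [Set.mem_setOf_eq] at hj2
          omega
        exact ⟨hφtail (k0+1) j hj2', hg, hj1⟩
    have := hMosc k0
    rw [hk0] at this
    exact this hrs hosc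
  refine ⟨φ, hφmono, fun f => ?_⟩
  rcases eq_or_ne f 0 with rfl | hf
  · exact ⟨0, by simpa using (tendsto_const_nhds : Tendsto (fun _ : ℕ => (0:ℝ)) atTop _)⟩
  have hnf : ‖f‖ ≠ 0 := norm_ne_zero_iff.mpr hf
  set g : X →L[ℝ] ℝ := ‖f‖⁻¹ • f with hg
  have hgn : ‖g‖ ≤ 1 := by
    have h1 : ‖g‖ = ‖(‖f‖⁻¹ : ℝ)‖ * ‖f‖ := by rw [hg]; exact norm_smul (‖f‖⁻¹ : ℝ) f
    rw [h1, norm_inv, norm_norm, inv_mul_cancel₀ hnf]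
  set t : ℕ → ℝ := fun j => g (x (φ j)) with ht
  have hbdd : ∀ j, |t j| ≤ K := by
    intro j
    calc |t j| = ‖g (x (φ j))‖ := (Real.norm_eq_abs _).symm
      _ ≤ ‖g‖ * ‖x (φ j)‖ := g.le_opNorm _
      _ ≤ 1 * K := mul_le_mul hgn (hK _) (norm_nonneg _) zero_le_one
      _ = K := one_mul K
  have hba : IsBoundedUnder (· ≤ ·) atTop t :=
    ⟨K, eventually_map.mpr (Eventually.of_forall fun j => (abs_le.mp (hbdd j)).2)⟩
  have hbb : IsBoundedUnder (· ≥ ·) atTop t :=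
    ⟨-K, eventually_map.mpr (Eventually.of_forall fun j => (abs_le.mp (hbdd j)).1)⟩
  have heq : liminf t atTop = limsup t atTop := by
    by_contra hne
    have hlt : liminf t atTop < limsup t atTop :=
      lt_of_le_of_ne (liminf_le_limsup hba hbb) hne
    obtain ⟨r, hr1, hr2⟩ := exists_rat_btwn hlt
    obtain ⟨s, hs1, hs2⟩ := exists_rat_btwn hr2
    have hfr : ∃ᶠ j in atTop, t j < (r:ℝ) := frequently_lt_of_liminf_lt (hba.isCoboundedUnder_ge) hr1
    have hfs : ∃ᶠ j in atTop, (s:ℝ) < t j := frequently_lt_of_lt_limsup (hbb.isCoboundedUnder_le) hs2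
    refine hkey g hgn r s hs1 ⟨?_, ?_⟩
    · exact Nat.frequently_atTop_iff_infinite.mp (hfr.mono fun j hj => le_of_lt hj)
    · exact Nat.frequently_atTop_iff_infinite.mp (hfs.mono fun j hj => le_of_lt hj)
  have hconv : Tendsto t atTop (𝓝 (limsup t atTop)) :=
    tendsto_of_liminf_eq_limsup heq rfl hba hbb
  refine ⟨‖f‖ * limsup t atTop, ?_⟩
  have hrw : (fun j => f (x (φ j))) = fun j => ‖f‖ * t j := by
    funext j
    rw [ht, hg]
    simp only [ContinuousLinearMap.smul_apply, smul_eq_mul]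
    rw [← mul_assoc, mul_inv_cancel₀ hnf, one_mul]
  rw [hrw]
  exact hconv.const_mul _

end Proof2

/-- For a real Banach space `X`, the following are equivalent:
(1) `X` has the Schur property;
(2) every bounded sequence in `X` has a subsequence which is either norm convergent or
    equivalent to the canonical basis of `ℓ₁`;
(3) every weakly precompact subset of `X` is relatively compact in the norm topology. -/
theorem stmt1 (X : Type*) [NormedAddCommGroup X] [NormedSpace ℝ X] [CompleteSpace X] :
    List.TFAE
      [∀ (x : ℕ → X) (l : X), WeaklyConvergesTo x l → Tendsto x atTop (𝓝 l),
       ∀ x : ℕ → X, Bornology.IsBounded (Set.range x) →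
         ∃ φ : ℕ → ℕ, StrictMono φ ∧
           ((∃ l : X, Tendsto (x ∘ φ) atTop (𝓝 l)) ∨ IsEquivL1Basis (x ∘ φ)),
       ∀ A : Set X, WeaklyPrecompact A → IsCompact (closure A)] := by
  tfae_have 1 → 2 := by
    intro h1 x hbx
    obtain ⟨K, hK⟩ := isBounded_iff_forall_norm_le.mp hbx
    have hK' : ∀ n, ‖x n‖ ≤ K := fun n => hK _ (Set.mem_range_self n)
    by_cases hL : ∃ φ : ℕ → ℕ, StrictMono φ ∧ IsEquivL1Basis (x ∘ φ)
    · obtain ⟨φ, h1φ, h2φ⟩ := hL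
      exact ⟨φ, h1φ, Or.inr h2φ⟩
    · push_neg at hL
      obtain ⟨φ, hφ, hwc⟩ := rosenthal_extract x K hK' hL
      obtain ⟨l, hl⟩ := schur_tendsto_of_weaklyCauchy h1 (y := x ∘ φ) hwc
      exact ⟨φ, hφ, Or.inl ⟨l, hl⟩⟩
  tfae_have 2 → 3 := by
    intro h2 A hA
    obtain ⟨hAb, hAl1⟩ := hA
    have hseq : IsSeqCompact (closure A) := by
      intro y hy
      have hchoose : ∀ n : ℕ, ∃ b ∈ A, dist (y n) b < 1/(n+1) :=
        fun n => Metric.mem_closure_iff.mp (hy n) _ (by positivity)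
      choose a ha hd using hchoose
      have hab : IsBounded (Set.range a) := hAb.subset (Set.range_subset_iff.mpr ha)
      obtain ⟨φ, hφ, hcase⟩ := h2 a hab
      rcases hcase with ⟨l, hl⟩ | hl1
      · refine ⟨l, mem_closure_of_tendsto hl (Eventually.of_forall (fun n => ha (φ n))), φ, hφ, ?_⟩
        have hdist : Tendsto (fun k => dist (a (φ k)) (y (φ k))) atTop (𝓝 0) := by
          refine squeeze_zero (fun k => dist_nonneg) (fun k => ?_)
            tendsto_one_div_add_atTop_nhds_zero_nat
          rw [dist_comm]
          refine (hd (φ k)).le.trans ?_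
          have h1 : (k:ℝ) + 1 ≤ (φ k : ℝ) + 1 :=
            add_le_add_left (Nat.cast_le.mpr hφ.le_apply) 1
          exact one_div_le_one_div_of_le (by positivity) h1
        exact hl.congr_dist hdist
      · exact absurd hl1 (hAl1 (a ∘ φ) (fun n => ha (φ n)))
    exact hseq.isCompact
  tfae_have 3 → 1 := by
    intro h3 x l hw
    have hfx : ∀ f : X →L[ℝ] ℝ, Tendsto (fun n => f (x n)) atTop (𝓝 (f l)) :=
      weaklyConvergesTo_iff.mp hw
    have hpt : ∀ f : StrongDual ℝ X, ∃ C, ∀ n,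
        ‖(NormedSpace.inclusionInDoubleDual ℝ X (x n)) f‖ ≤ C := by
      intro f
      obtain ⟨C, hC⟩ := (hfx f).norm.bddAbove_range
      exact ⟨C, fun n => by
        simpa [NormedSpace.dual_def] using hC (Set.mem_range_self (f := fun n => ‖f (x n)‖) n)⟩
    obtain ⟨C', hC'⟩ :=
      banach_steinhaus (g := fun n => NormedSpace.inclusionInDoubleDual ℝ X (x n)) hpt
    have hxb : ∀ n, ‖x n‖ ≤ C' := by
      intro n
      have := (NormedSpace.inclusionInDoubleDualLi ℝ (E := X)).norm_map (x n)
      rw [← this]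
      exact hC' n
    have hWP : WeaklyPrecompact (Set.range x) := by
      constructor
      · refine isBounded_iff_forall_norm_le.mpr ⟨C', ?_⟩
        rintro v ⟨n, rfl⟩
        exact hxb n
      · intro y hy hl1
        choose k hk using hy
        have hyinj : Function.Injective y := hl1.injective
        have hkinj : Function.Injective k := by
          intro a b hab
          apply hyinj
          rw [← hk a, ← hk b, hab]
        have hkt : Tendsto k atTop atTop := by
          rw [← Nat.cofinite_eq_atTop]
          exact hkinj.tendsto_cofinite
        refine hl1.not_weaklyCauchy (fun f => ⟨f l, ?_⟩)
        have h2 := (hfx f).comp hkt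
        have h3 : (fun n => f (y n)) = fun n => f (x (k n)) := by
          funext n; rw [← hk n]
        rw [h3]
        exact h2
    have hcomp := h3 _ hWP
    refine tendsto_of_subseq_tendsto (fun ns hns => ?_)
    have hmem : ∀ n, x (ns n) ∈ closure (Set.range x) :=
      fun n => subset_closure (Set.mem_range_self _)
    obtain ⟨a, _, ψ, hψ, hten⟩ := hcomp.tendsto_subseq hmem
    have hal : a = l := by
      rw [NormedSpace.eq_iff_forall_dual_eq ℝ]
      intro f
      have h1 : Tendsto (fun n => f (x (ns (ψ n)))) atTop (𝓝 (f a)) :=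
        (f.continuous.tendsto a).comp hten
      have h2 : Tendsto (fun n => f (x (ns (ψ n)))) atTop (𝓝 (f l)) :=
        (hfx f).comp (hns.comp hψ.tendsto_atTop)
      exact tendsto_nhds_unique h1 h2
    refine ⟨ψ, ?_⟩
    rw [← hal]
    exact hten
  tfae_finish
end

section
/- Let X be a real Banach space, T : X → ℓ1 a bounded linear operator, and A ⊆ X a weakly precompact set. Then T(A) is relatively compact in the norm topology of ℓ1. -/
open Filter Topology Bornology

lemma l1_hasSum (f : lp (fun _ : ℕ => ℝ) 1) : HasSum (fun i => |f i|) ‖f‖ := by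
  have := lp.hasSum_norm (p := 1) (by norm_num) f
  simpa using this

lemma l1_sum_le (f : lp (fun _ : ℕ => ℝ) 1) (s : Finset ℕ) : ∑ i ∈ s, |f i| ≤ ‖f‖ :=
  sum_le_hasSum s (fun i _ => abs_nonneg _) (l1_hasSum f)

lemma l1_partial (f : lp (fun _ : ℕ => ℝ) 1) {η : ℝ} (hη : 0 < η) :
    ∃ N : ℕ, ‖f‖ - η < ∑ j ∈ Finset.range N, |f j| := by
  have h := (l1_hasSum f).tendsto_sum_nat
  have h2 := h.eventually (eventually_gt_nhds (show ‖f‖ - η < ‖f‖ by linarith))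
  exact h2.exists

lemma sum_blocks (N : ℕ → ℕ) (hN : Monotone N) (u : ℕ → ℝ) :
    ∀ a b, a ≤ b → ∑ k ∈ Finset.Ico a b, ∑ j ∈ Finset.Ico (N k) (N (k+1)), u j
      = ∑ j ∈ Finset.Ico (N a) (N b), u j := by
  intro a b hab
  induction b, hab using Nat.le_induction with
  | base => simp
  | succ b hab ih =>
    rw [Finset.sum_Ico_succ_top (by omega), ih,
      Finset.sum_Ico_consecutive _ (hN hab) (hN (Nat.le_succ b))]



set_option maxHeartbeats 1000000 in
lemma key {X : Type*} [NormedAddCommGroup X] [NormedSpace ℝ X]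
    (T : X →L[ℝ] lp (fun _ : ℕ => ℝ) 1) {A : Set X} (hA : WeaklyPrecompact A)
    (x : ℕ → X) (hx : ∀ n, x n ∈ A) :
    ∃ φ : ℕ → ℕ, StrictMono φ ∧ CauchySeq (fun n => T (x (φ n))) := by
  obtain ⟨hAb, hAl1⟩ := hA
  obtain ⟨M₀, hM₀⟩ := hAb.exists_norm_le
  set M' : ℝ := ‖T‖ * (max M₀ 0) + 1 with hM'def
  have hM' : 0 < M' := by positivity
  have hyb : ∀ n, ‖T (x n)‖ ≤ M' := by
    intro n
    have h1 : ‖T (x n)‖ ≤ ‖T‖ * ‖x n‖ := T.le_opNorm _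
    have h2 : ‖x n‖ ≤ max M₀ 0 := le_trans (hM₀ _ (hx n)) (le_max_left _ _)
    nlinarith [norm_nonneg T, norm_nonneg (x n)]
  -- coordinatewise convergent subsequence
  have hK : IsCompact (Set.pi Set.univ fun _ : ℕ => Set.Icc (-M') M') :=
    isCompact_univ_pi fun _ => isCompact_Icc
  have hmem : ∀ n, (fun k => (T (x n) : ∀ _ : ℕ, ℝ) k) ∈
      Set.pi Set.univ fun _ : ℕ => Set.Icc (-M') M' := by
    intro n k _
    have h := lp.norm_apply_le_norm (by norm_num) (T (x n)) k
    rw [Real.norm_eq_abs] at h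
    have := abs_le.1 (h.trans (hyb n))
    exact Set.mem_Icc.2 this
  obtain ⟨g0, hg0K, φ₁, hφ₁, hconv⟩ := hK.isSeqCompact hmem
  have hconv' : ∀ j, Tendsto (fun n => (T (x (φ₁ n)) : ∀ _ : ℕ, ℝ) j) atTop (𝓝 (g0 j)) := by
    rw [tendsto_pi_nhds] at hconv
    exact fun j => hconv j
  have hGmem : Memℓp g0 1 := by
    refine lp.memℓp_of_tendsto (l := atTop) (F := fun n => T (x (φ₁ n)))
      (isBounded_iff_forall_norm_le.2 ⟨M', by rintro _ ⟨n, rfl⟩; exact hyb _⟩) ?_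
    rw [tendsto_pi_nhds]
    exact hconv'
  set G : lp (fun _ : ℕ => ℝ) 1 := ⟨g0, hGmem⟩ with hGdef
  refine ⟨φ₁, hφ₁, ?_⟩
  by_contra hcau
  rw [Metric.cauchySeq_iff] at hcau
  push_neg at hcau
  obtain ⟨ε, hε, hce⟩ := hcau
  set y : ℕ → lp (fun _ : ℕ => ℝ) 1 := fun n => T (x (φ₁ n)) with hydef
  set δ : ℝ := ε / 2 with hδdef
  have hδ : 0 < δ := by positivity
  have hfreq : ∃ᶠ n in atTop, δ ≤ ‖y n - G‖ := by
    rw [frequently_atTop]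
    intro N
    obtain ⟨m, hm, n, hn, hd⟩ := hce N
    rw [dist_eq_norm] at hd
    have htri : ε ≤ ‖y m - G‖ + ‖y n - G‖ := by
      calc ε ≤ ‖y m - y n‖ := hd
        _ = ‖(y m - G) - (y n - G)‖ := by congr 1; abel
        _ ≤ ‖y m - G‖ + ‖y n - G‖ := norm_sub_le _ _
    rcases le_or_gt δ ‖y m - G‖ with h | h
    · exact ⟨m, hm, h⟩
    · exact ⟨n, hn, by simp only [hδdef] at h ⊢; linarith⟩
  obtain ⟨ψ, hψ, hwn⟩ := extraction_of_frequently_atTop hfreq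
  set w : ℕ → lp (fun _ : ℕ => ℝ) 1 := fun k => y (ψ k) - G with hwdef
  have hwto : ∀ j, Tendsto (fun k => (w k : ∀ _ : ℕ, ℝ) j) atTop (𝓝 0) := by
    intro j
    have h1 : Tendsto (fun n => (y n : ∀ _ : ℕ, ℝ) j - g0 j) atTop (𝓝 0) := by
      simpa using (hconv' j).sub_const (g0 j)
    have h2 := h1.comp hψ.tendsto_atTop
    refine h2.congr fun k => ?_
    show (y (ψ k) : ∀ _ : ℕ, ℝ) j - g0 j = (w k : ∀ _ : ℕ, ℝ) j
    rw [hwdef]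
    simp only [lp.coeFn_sub, Pi.sub_apply]
    rfl
  set η : ℝ := δ / 10 with hηdef
  have hη : 0 < η := by positivity
  have hhead : ∀ N0 : ℕ, ∃ m, ∑ j ∈ Finset.range N0, |(w m : ∀ _ : ℕ, ℝ) j| < η := by
    intro N0
    have ht : Tendsto (fun m => ∑ j ∈ Finset.range N0, |(w m : ∀ _ : ℕ, ℝ) j|) atTop (𝓝 0) := by
      have := tendsto_finset_sum (Finset.range N0) (fun j _ => (hwto j).abs)
      simpa using this
    exact (ht.eventually (eventually_lt_nhds hη)).exists
  have hstep : ∀ N : ℕ, ∃ q : ℕ × ℕ,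
      (∑ j ∈ Finset.range N, |(w q.1 : ∀ _ : ℕ, ℝ) j| < η) ∧ N ≤ q.2 ∧
      ‖w q.1‖ - η < ∑ j ∈ Finset.range q.2, |(w q.1 : ∀ _ : ℕ, ℝ) j| := by
    intro N
    obtain ⟨m, hm⟩ := hhead N
    obtain ⟨N', hN'⟩ := l1_partial (w m) hη
    refine ⟨(m, max N' N), hm, le_max_right _ _, lt_of_lt_of_le hN' ?_⟩
    exact Finset.sum_le_sum_of_subset_of_nonneg
      (Finset.range_subset_range.2 (le_max_left _ _)) (fun _ _ _ => abs_nonneg _)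
  obtain ⟨N₀, hN₀⟩ := l1_partial G hη
  set rec : ℕ → ℕ × ℕ :=
    fun k => Nat.rec ((0, N₀) : ℕ × ℕ) (fun _ p => Classical.choose (hstep p.2)) k with hrecdef
  set θ : ℕ → ℕ := fun k => (rec (k+1)).1 with hθdef
  set Nf : ℕ → ℕ := fun k => (rec k).2 with hNfdef
  have hNf0 : Nf 0 = N₀ := rfl
  have hspec : ∀ k, (∑ j ∈ Finset.range (Nf k), |(w (θ k) : ∀ _ : ℕ, ℝ) j| < η) ∧
      Nf k ≤ Nf (k+1) ∧
      ‖w (θ k)‖ - η < ∑ j ∈ Finset.range (Nf (k+1)), |(w (θ k) : ∀ _ : ℕ, ℝ) j| := by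
    intro k
    exact Classical.choose_spec (hstep (rec k).2)
  have hNmono : Monotone Nf := monotone_nat_of_le_succ fun k => (hspec k).2.1
  set v : ℕ → lp (fun _ : ℕ => ℝ) 1 := fun k => w (θ k) with hvdef
  have hvlb : ∀ k, δ ≤ ‖v k‖ := fun k => hwn (θ k)
  have hmass_own : ∀ k, δ - 2 * η ≤ ∑ j ∈ Finset.Ico (Nf k) (Nf (k+1)), |(v k : ∀ _ : ℕ, ℝ) j| := by
    intro k
    rw [Finset.sum_Ico_eq_sub _ (hNmono (Nat.le_succ k))]
    have h1 := (hspec k).1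
    have h2 := (hspec k).2.2
    have h3 := hvlb k
    linarith
  have hmass_tot : ∀ l n : ℕ, l < n →
      (∑ k ∈ Finset.range n, ∑ j ∈ Finset.Ico (Nf k) (Nf (k+1)), |(v l : ∀ _ : ℕ, ℝ) j|)
        - (∑ j ∈ Finset.Ico (Nf l) (Nf (l+1)), |(v l : ∀ _ : ℕ, ℝ) j|) ≤ 2 * η := by
    intro l n hln
    rw [Finset.range_eq_Ico, sum_blocks Nf hNmono _ 0 n (Nat.zero_le n)]
    have htot : ∑ j ∈ Finset.Ico (Nf 0) (Nf n), |(v l : ∀ _ : ℕ, ℝ) j| ≤ ‖v l‖ := by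
      refine le_trans (Finset.sum_le_sum_of_subset_of_nonneg ?_ fun _ _ _ => abs_nonneg _)
        (l1_sum_le (v l) (Finset.range (Nf n)))
      intro j hj
      rw [Finset.mem_Ico] at hj
      exact Finset.mem_range.2 hj.2
    have hown : ‖v l‖ - 2 * η ≤ ∑ j ∈ Finset.Ico (Nf l) (Nf (l+1)), |(v l : ∀ _ : ℕ, ℝ) j| := by
      rw [Finset.sum_Ico_eq_sub _ (hNmono (Nat.le_succ l))]
      have h1 := (hspec l).1
      have h2 := (hspec l).2.2
      linarith
    linarith
  have hGblocks : ∀ n : ℕ, ∑ j ∈ Finset.Ico (Nf 0) (Nf n), |(G : ∀ _ : ℕ, ℝ) j| ≤ η := by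
    intro n
    rw [Finset.sum_Ico_eq_sub _ (hNmono (Nat.zero_le n))]
    have h1 := l1_sum_le G (Finset.range (Nf n))
    have h0 : ‖G‖ - η < ∑ j ∈ Finset.range (Nf 0), |(G : ∀ _ : ℕ, ℝ) j| := by
      rw [hNf0]; exact hN₀
    linarith
  -- the contradiction: the sequence x' is equivalent to the ℓ¹ basis
  set x' : ℕ → X := fun k => x (φ₁ (ψ (θ k))) with hx'def
  refine hAl1 x' (fun k => hx _) ?_
  refine ⟨(δ/2) / (‖T‖ + 1), max M₀ 0 + 1, by positivity, by positivity, ?_⟩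
  intro n a
  set b : ℕ → ℝ := fun k => if h : k < n then a ⟨k, h⟩ else 0 with hbdef
  have hab : ∀ i : Fin n, a i = b (i : ℕ) := by
    intro i
    rw [hbdef]
    simp [i.isLt]
  set S : ℝ := ∑ i, |a i| with hSdef
  have hS0 : 0 ≤ S := Finset.sum_nonneg fun i _ => abs_nonneg _
  have hSb : S = ∑ k ∈ Finset.range n, |b k| := by
    rw [hSdef, Finset.sum_range fun k => |b k|]
    exact Finset.sum_congr rfl fun i _ => by rw [hab i]
  set s0 : ℝ := ∑ i, a i with hs0def
  have hs0b : s0 = ∑ k ∈ Finset.range n, b k := by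
    rw [hs0def, Finset.sum_range fun k => b k]
    exact Finset.sum_congr rfl fun i _ => hab i
  have habs0 : |s0| ≤ S := by
    rw [hs0b, hSb]
    exact Finset.abs_sum_le_sum_abs _ _
  set u0 : X := ∑ i, a i • x' (i : ℕ) with hu0def
  have hYv : ∀ k : ℕ, T (x' k) = v k + G := by
    intro k
    show T (x' k) = (y (ψ (θ k)) - G) + G
    rw [hydef]
    simp [hx'def]
  have hcoord : ∀ j, ((T u0 : lp (fun _ : ℕ => ℝ) 1) : ∀ _ : ℕ, ℝ) j
      = (∑ k ∈ Finset.range n, b k * (v k : ∀ _ : ℕ, ℝ) j) + s0 * (G : ∀ _ : ℕ, ℝ) j := by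
    intro j
    have h1 : T u0 = ∑ i : Fin n, a i • T (x' (i : ℕ)) := by
      rw [hu0def, map_sum]
      simp
    have h2 : ((T u0 : lp (fun _ : ℕ => ℝ) 1) : ∀ _ : ℕ, ℝ) j
        = ∑ i : Fin n, a i * ((T (x' (i : ℕ)) : lp (fun _ : ℕ => ℝ) 1) : ∀ _ : ℕ, ℝ) j := by
      rw [h1, lp.coeFn_sum]
      simp [lp.coeFn_smul]
    rw [h2]
    have h3 : ∀ i : Fin n, ((T (x' (i : ℕ)) : lp (fun _ : ℕ => ℝ) 1) : ∀ _ : ℕ, ℝ) j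
        = (v (i : ℕ) : ∀ _ : ℕ, ℝ) j + (G : ∀ _ : ℕ, ℝ) j := by
      intro i
      rw [hYv]
      simp [lp.coeFn_add]
    calc ∑ i : Fin n, a i * ((T (x' (i : ℕ)) : lp (fun _ : ℕ => ℝ) 1) : ∀ _ : ℕ, ℝ) j
        = ∑ i : Fin n, (a i * (v (i : ℕ) : ∀ _ : ℕ, ℝ) j + a i * (G : ∀ _ : ℕ, ℝ) j) := by
          refine Finset.sum_congr rfl fun i _ => ?_
          rw [h3 i]
          ring
      _ = (∑ i : Fin n, a i * (v (i : ℕ) : ∀ _ : ℕ, ℝ) j) + (∑ i : Fin n, a i) * (G : ∀ _ : ℕ, ℝ) j := by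
          rw [Finset.sum_add_distrib, Finset.sum_mul]
      _ = (∑ k ∈ Finset.range n, b k * (v k : ∀ _ : ℕ, ℝ) j) + s0 * (G : ∀ _ : ℕ, ℝ) j := by
          rw [hs0def]
          congr 1
          rw [Finset.sum_range fun k => b k * (v k : ∀ _ : ℕ, ℝ) j]
          exact Finset.sum_congr rfl fun i _ => by rw [hab i]
  -- per-block lower bound
  have hblock : ∀ k ∈ Finset.range n,
      |b k| * (∑ j ∈ Finset.Ico (Nf k) (Nf (k+1)), |(v k : ∀ _ : ℕ, ℝ) j|)
      - (∑ l ∈ (Finset.range n).erase k,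
          |b l| * ∑ j ∈ Finset.Ico (Nf k) (Nf (k+1)), |(v l : ∀ _ : ℕ, ℝ) j|)
      - |s0| * (∑ j ∈ Finset.Ico (Nf k) (Nf (k+1)), |(G : ∀ _ : ℕ, ℝ) j|)
      ≤ ∑ j ∈ Finset.Ico (Nf k) (Nf (k+1)), |((T u0 : lp (fun _ : ℕ => ℝ) 1) : ∀ _ : ℕ, ℝ) j| := by
    intro k hk
    have hpt : ∀ j, |b k| * |(v k : ∀ _ : ℕ, ℝ) j|
        - (∑ l ∈ (Finset.range n).erase k, |b l| * |(v l : ∀ _ : ℕ, ℝ) j|)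
        - |s0| * |(G : ∀ _ : ℕ, ℝ) j|
        ≤ |((T u0 : lp (fun _ : ℕ => ℝ) 1) : ∀ _ : ℕ, ℝ) j| := by
      intro j
      have hsplit : ((T u0 : lp (fun _ : ℕ => ℝ) 1) : ∀ _ : ℕ, ℝ) j
          = b k * (v k : ∀ _ : ℕ, ℝ) j
            + ((∑ l ∈ (Finset.range n).erase k, b l * (v l : ∀ _ : ℕ, ℝ) j)
              + s0 * (G : ∀ _ : ℕ, ℝ) j) := by
        rw [hcoord j, ← Finset.add_sum_erase _ _ hk]
        ring
      set R : ℝ := (∑ l ∈ (Finset.range n).erase k, b l * (v l : ∀ _ : ℕ, ℝ) j)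
        + s0 * (G : ∀ _ : ℕ, ℝ) j with hRdef
      have h1 : |b k * (v k : ∀ _ : ℕ, ℝ) j| - |R|
          ≤ |((T u0 : lp (fun _ : ℕ => ℝ) 1) : ∀ _ : ℕ, ℝ) j| := by
        rw [hsplit]
        have := abs_sub_abs_le_abs_sub (b k * (v k : ∀ _ : ℕ, ℝ) j) (-R)
        rw [abs_neg, sub_neg_eq_add] at this
        exact this
      have h2 : |R| ≤ (∑ l ∈ (Finset.range n).erase k, |b l| * |(v l : ∀ _ : ℕ, ℝ) j|)
          + |s0| * |(G : ∀ _ : ℕ, ℝ) j| := by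
        rw [hRdef]
        refine le_trans (abs_add_le _ _) (add_le_add ?_ (le_of_eq (abs_mul _ _)))
        refine le_trans (Finset.abs_sum_le_sum_abs _ _) ?_
        exact le_of_eq (Finset.sum_congr rfl fun l _ => abs_mul _ _)
      have h3 : |b k * (v k : ∀ _ : ℕ, ℝ) j| = |b k| * |(v k : ∀ _ : ℕ, ℝ) j| := abs_mul _ _
      linarith
    calc |b k| * (∑ j ∈ Finset.Ico (Nf k) (Nf (k+1)), |(v k : ∀ _ : ℕ, ℝ) j|)
        - (∑ l ∈ (Finset.range n).erase k,
            |b l| * ∑ j ∈ Finset.Ico (Nf k) (Nf (k+1)), |(v l : ∀ _ : ℕ, ℝ) j|)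
        - |s0| * (∑ j ∈ Finset.Ico (Nf k) (Nf (k+1)), |(G : ∀ _ : ℕ, ℝ) j|)
        = ∑ j ∈ Finset.Ico (Nf k) (Nf (k+1)),
            (|b k| * |(v k : ∀ _ : ℕ, ℝ) j|
            - (∑ l ∈ (Finset.range n).erase k, |b l| * |(v l : ∀ _ : ℕ, ℝ) j|)
            - |s0| * |(G : ∀ _ : ℕ, ℝ) j|) := by
          rw [Finset.sum_sub_distrib, Finset.sum_sub_distrib, Finset.mul_sum, Finset.mul_sum,
            Finset.sum_comm]
          congr 2
          exact Finset.sum_congr rfl fun l _ => Finset.mul_sum _ _ _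
      _ ≤ _ := Finset.sum_le_sum fun j _ => hpt j
  -- summing the blocks
  have hT1 : (δ - 2 * η) * S ≤ ∑ k ∈ Finset.range n,
      |b k| * (∑ j ∈ Finset.Ico (Nf k) (Nf (k+1)), |(v k : ∀ _ : ℕ, ℝ) j|) := by
    rw [hSb, Finset.mul_sum]
    refine Finset.sum_le_sum fun k _ => ?_
    rw [mul_comm (δ - 2*η) _]
    exact mul_le_mul_of_nonneg_left (hmass_own k) (abs_nonneg _)
  have hT2 : ∑ k ∈ Finset.range n, (∑ l ∈ (Finset.range n).erase k,
      |b l| * ∑ j ∈ Finset.Ico (Nf k) (Nf (k+1)), |(v l : ∀ _ : ℕ, ℝ) j|) ≤ 2 * η * S := by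
    have hswap : ∑ k ∈ Finset.range n, (∑ l ∈ (Finset.range n).erase k,
        |b l| * ∑ j ∈ Finset.Ico (Nf k) (Nf (k+1)), |(v l : ∀ _ : ℕ, ℝ) j|)
        = ∑ l ∈ Finset.range n, |b l| *
            ((∑ k ∈ Finset.range n, ∑ j ∈ Finset.Ico (Nf k) (Nf (k+1)), |(v l : ∀ _ : ℕ, ℝ) j|)
            - ∑ j ∈ Finset.Ico (Nf l) (Nf (l+1)), |(v l : ∀ _ : ℕ, ℝ) j|) := by
      have h1 : ∀ k ∈ Finset.range n, (∑ l ∈ (Finset.range n).erase k,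
          |b l| * ∑ j ∈ Finset.Ico (Nf k) (Nf (k+1)), |(v l : ∀ _ : ℕ, ℝ) j|)
          = (∑ l ∈ Finset.range n,
            |b l| * ∑ j ∈ Finset.Ico (Nf k) (Nf (k+1)), |(v l : ∀ _ : ℕ, ℝ) j|)
            - |b k| * ∑ j ∈ Finset.Ico (Nf k) (Nf (k+1)), |(v k : ∀ _ : ℕ, ℝ) j| := by
        intro k hk
        exact Finset.sum_erase_eq_sub hk
      rw [Finset.sum_congr rfl h1, Finset.sum_sub_distrib, Finset.sum_comm]
      rw [← Finset.sum_sub_distrib]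
      refine Finset.sum_congr rfl fun l _ => ?_
      have hms := Finset.mul_sum (Finset.range n)
        (fun k => ∑ j ∈ Finset.Ico (Nf k) (Nf (k+1)), |(v l : ∀ _ : ℕ, ℝ) j|) (|b l|)
      rw [mul_sub, hms]
    rw [hswap, hSb, Finset.mul_sum]
    refine Finset.sum_le_sum fun l hl => ?_
    rw [mul_comm (2*η) _]
    exact mul_le_mul_of_nonneg_left (hmass_tot l n (Finset.mem_range.1 hl)) (abs_nonneg _)
  have hT3 : ∑ k ∈ Finset.range n,
      |s0| * (∑ j ∈ Finset.Ico (Nf k) (Nf (k+1)), |(G : ∀ _ : ℕ, ℝ) j|) ≤ η * S := by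
    rw [← Finset.mul_sum, Finset.range_eq_Ico,
      sum_blocks Nf hNmono _ 0 n (Nat.zero_le n)]
    calc |s0| * ∑ j ∈ Finset.Ico (Nf 0) (Nf n), |(G : ∀ _ : ℕ, ℝ) j|
        ≤ S * η := mul_le_mul habs0 (hGblocks n)
          (Finset.sum_nonneg fun _ _ => abs_nonneg _) hS0
      _ = η * S := mul_comm _ _
  have hnorm : ∑ k ∈ Finset.range n, ∑ j ∈ Finset.Ico (Nf k) (Nf (k+1)),
      |((T u0 : lp (fun _ : ℕ => ℝ) 1) : ∀ _ : ℕ, ℝ) j| ≤ ‖T u0‖ := by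
    rw [Finset.range_eq_Ico, sum_blocks Nf hNmono _ 0 n (Nat.zero_le n)]
    exact l1_sum_le _ _
  have hmain : (δ / 2) * S ≤ ‖T u0‖ := by
    have hsum := Finset.sum_le_sum hblock
    rw [Finset.sum_sub_distrib, Finset.sum_sub_distrib] at hsum
    have hη5 : (δ - 2*η) * S - 2*η*S - η*S = (δ/2) * S := by rw [hηdef]; ring
    linarith [hT1, hT2, hT3, hnorm, hsum]
  constructor
  · -- lower bound
    have hTle : ‖T u0‖ ≤ (‖T‖ + 1) * ‖u0‖ := by
      have h1 := T.le_opNorm u0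
      nlinarith [norm_nonneg u0]
    rw [div_mul_eq_mul_div, div_le_iff₀ (by positivity : (0:ℝ) < ‖T‖ + 1)]
    calc δ / 2 * S ≤ ‖T u0‖ := hmain
      _ ≤ (‖T‖ + 1) * ‖u0‖ := hTle
      _ = ‖u0‖ * (‖T‖ + 1) := mul_comm _ _
  · -- upper bound
    calc ‖u0‖ ≤ ∑ i, ‖a i • x' (i : ℕ)‖ := norm_sum_le _ _
      _ = ∑ i, |a i| * ‖x' (i : ℕ)‖ := by
          refine Finset.sum_congr rfl fun i _ => ?_
          rw [norm_smul, Real.norm_eq_abs]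
      _ ≤ ∑ i : Fin n, |a i| * (max M₀ 0 + 1) := by
          refine Finset.sum_le_sum fun i _ => ?_
          refine mul_le_mul_of_nonneg_left ?_ (abs_nonneg _)
          have := hM₀ _ (hx (φ₁ (ψ (θ (i : ℕ)))))
          have h2 : ‖x' (i : ℕ)‖ ≤ M₀ := this
          have h3 : M₀ ≤ max M₀ 0 := le_max_left _ _
          linarith
      _ = (max M₀ 0 + 1) * S := by rw [← Finset.sum_mul, hSdef, mul_comm]

/-- If `T : X → ℓ₁` is a bounded linear operator on a real Banach space `X` and
`A ⊆ X` is weakly precompact, then `T '' A` is relatively compact in the norm topology of `ℓ₁`. -/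
theorem stmt7 (X : Type*) [NormedAddCommGroup X] [NormedSpace ℝ X] [CompleteSpace X]
    (T : X →L[ℝ] lp (fun _ : ℕ => ℝ) 1) (A : Set X) (hA : WeaklyPrecompact A) :
    IsCompact (closure (T '' A)) := by
  have hseq : IsSeqCompact (closure (T '' A)) := by
    intro u hu
    -- approximate each u n by an element of T '' A
    have happrox : ∀ n : ℕ, ∃ xa : X, xa ∈ A ∧ dist (u n) (T xa) < 1 / (n + 1) := by
      intro n
      have h := Metric.mem_closure_iff.1 (hu n) (1 / (n + 1)) (by positivity)
      obtain ⟨b, hb, hdb⟩ := h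
      obtain ⟨xa, hxa, rfl⟩ := hb
      exact ⟨xa, hxa, hdb⟩
    choose xa hxa hdxa using happrox
    obtain ⟨φ, hφ, hcau⟩ := key T hA xa hxa
    obtain ⟨L, hL⟩ := cauchySeq_tendsto_of_complete hcau
    have hLmem : L ∈ closure (T '' A) :=
      mem_closure_of_tendsto hL (Eventually.of_forall fun n => ⟨xa (φ n), hxa _, rfl⟩)
    refine ⟨L, hLmem, φ, hφ, ?_⟩
    have hdist : Tendsto (fun n => dist (u (φ n)) (T (xa (φ n)))) atTop (𝓝 0) := by
      have hb : ∀ n : ℕ, dist (u (φ n)) (T (xa (φ n))) ≤ 1 / (n + 1) := by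
        intro n
        refine le_trans (hdxa (φ n)).le ?_
        have : (n : ℝ) + 1 ≤ (φ n : ℝ) + 1 := by
          have h2 : n ≤ φ n := hφ.le_apply
          exact_mod_cast by omega
        exact one_div_le_one_div_of_le (by positivity) this
      have h0 : Tendsto (fun n : ℕ => 1 / ((n : ℝ) + 1)) atTop (𝓝 0) :=
        tendsto_one_div_add_atTop_nhds_zero_nat
      exact squeeze_zero (fun n => dist_nonneg) hb h0
    have := hL
    exact Filter.Tendsto.congr_dist this (by simpa [dist_comm] using hdist)
  exact hseq.isCompact
end

section
/- Let X be a real Banach space and A ⊆ X a bounded set. Then A is weakly precompact if and only if every sequence in A has a weakly Cauchy subsequence. -/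
open Filter Topology Bornology

namespace RosenthalNW

/-- Generic recursion helper: build an infinite sequence from a step relation. -/
lemma exists_seq_of_step {α : Type*} {P : α → Prop} {R : α → α → Prop} (a0 : α) (h0 : P a0)
    (hstep : ∀ a, P a → ∃ b, P b ∧ R a b) :
    ∃ f : ℕ → α, f 0 = a0 ∧ (∀ n, P (f n)) ∧ ∀ n, R (f n) (f (n + 1)) := by
  choose stepf hP hR using hstep
  let F : ℕ → {a // P a} := fun n => Nat.rec ⟨a0, h0⟩ (fun _ p => ⟨stepf p.1 p.2, hP _ _⟩) n
  exact ⟨fun n => (F n).1, rfl, fun n => (F n).2, fun n => hR _ _⟩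

lemma smAdd (c : ℕ) : StrictMono (fun t : ℕ => t + c) := fun a b h => by simpa using h

/-- If the range of a strict mono `v` is inside the range of a strict mono `f`,
then `v` is a subsequence of `f`. -/
lemma exists_comp {f v : ℕ → ℕ} (hf : StrictMono f) (hv : StrictMono v)
    (h : ∀ k, ∃ j, f j = v k) : ∃ g, StrictMono g ∧ v = f ∘ g := by
  choose g hg using h
  refine ⟨g, fun a b hab => ?_, funext fun k => (hg k).symm⟩
  have : f (g a) < f (g b) := by rw [hg a, hg b]; exact hv hab
  exact hf.lt_iff_lt.mp this

variable (Bad : List ℕ → Prop)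

def seg (f : ℕ → ℕ) (n : ℕ) : List ℕ := (List.range n).map f

@[simp] lemma seg_length (f : ℕ → ℕ) (n : ℕ) : (seg f n).length = n := by simp [seg]

lemma seg_get (f : ℕ → ℕ) (n i : ℕ) (h : i < n) :
    (seg f n)[i]'(by simpa [seg] using h) = f i := by simp [seg]

def Hit (f : ℕ → ℕ) : Prop := ∃ n, Bad (seg f n)

def ext (s : List ℕ) (f : ℕ → ℕ) : ℕ → ℕ :=
  fun i => if h : i < s.length then s.get ⟨i, h⟩ else f (i - s.length)

@[simp] lemma ext_nil (f : ℕ → ℕ) : ext [] f = f := by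
  funext i; simp [ext]

lemma seg_ext (s : List ℕ) (f : ℕ → ℕ) : seg (ext s f) s.length = s := by
  apply List.ext_getElem
  · simp
  · intro i h1 h2
    simp only [seg, List.getElem_map, List.getElem_range, ext, List.get_eq_getElem]
    rw [dif_pos h2]

def cons' (a : ℕ) (f : ℕ → ℕ) : ℕ → ℕ := fun i => match i with
  | 0 => a
  | (k+1) => f k

lemma ext_snoc (s : List ℕ) (a : ℕ) (f : ℕ → ℕ) :
    ext (s ++ [a]) f = ext s (cons' a f) := by
  funext i
  simp only [ext, cons', List.length_append, List.length_singleton]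
  rcases lt_trichotomy i s.length with h | h | h
  · rw [dif_pos (by omega), dif_pos h]
    rw [List.get_eq_getElem, List.get_eq_getElem, List.getElem_append_left]
  · subst h
    rw [dif_pos (by omega), dif_neg (by omega)]
    simp [List.get_eq_getElem, List.getElem_append_right]
  · rw [dif_neg (by omega), dif_neg (by omega)]
    have : i - s.length = (i - (s.length + 1)) + 1 := by omega
    rw [this]

lemma cons'_head_tail (P : ℕ → ℕ) : cons' (P 0) (fun t => P (t + 1)) = P := by
  funext i; cases i <;> rfl

def Accept (s : List ℕ) (M : ℕ → ℕ) : Prop :=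
  ∀ g : ℕ → ℕ, StrictMono g → Hit Bad (ext s (M ∘ g))

def Reject (s : List ℕ) (M : ℕ → ℕ) : Prop :=
  ∀ g : ℕ → ℕ, StrictMono g → ¬ Accept Bad s (M ∘ g)

lemma accept_comp {s M g} (h : Accept Bad s M) (hg : StrictMono g) :
    Accept Bad s (M ∘ g) := fun g' hg' => by
  have := h (g ∘ g') (hg.comp hg')
  simpa [Function.comp_assoc] using this

lemma reject_comp {s M g} (h : Reject Bad s M) (hg : StrictMono g) :
    Reject Bad s (M ∘ g) := fun g' hg' => by
  have := h (g ∘ g') (hg.comp hg')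
  simpa [Function.comp_assoc] using this

lemma reject_of_subseq {s M v} (h : Reject Bad s M) (hM : StrictMono M) (hv : StrictMono v)
    (hsub : ∀ k, ∃ j, M j = v k) : Reject Bad s v := by
  obtain ⟨g, hg, rfl⟩ := exists_comp hM hv hsub
  exact reject_comp Bad h hg


section
variable (Bad : List ℕ → Prop)

lemma hit_def (f : ℕ → ℕ) : Hit Bad f ↔ ∃ n, Bad (seg f n) := Iff.rfl

lemma seg_sorted (f : ℕ → ℕ) (hf : StrictMono f) (n : ℕ) : (seg f n).Pairwise (· < ·) := by
  unfold seg
  rw [List.pairwise_map]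
  exact List.Pairwise.imp (fun h => hf h) List.pairwise_lt_range

lemma seg_mem (f : ℕ → ℕ) (n : ℕ) (a : ℕ) : a ∈ seg f n ↔ ∃ i < n, f i = a := by
  simp [seg]

lemma decide_one (s : List ℕ) (M : ℕ → ℕ) (hM : StrictMono M) (hrej : Reject Bad s M) :
    ∃ M', StrictMono M' ∧ (∃ g, StrictMono g ∧ M' = M ∘ g) ∧
      ∀ j : ℕ, Reject Bad (s ++ [M' j]) (fun t => M' (t + (j + 1))) := by
  classical
  have hstep : ∀ T : ℕ → ℕ, StrictMono T → ∃ T', StrictMono T' ∧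
      ((∃ h, StrictMono h ∧ T' = (T ∘ (fun t => t + 1)) ∘ h) ∧
       (Reject Bad (s ++ [T 0]) (fun t => T (t + 1)) ∨ Accept Bad (s ++ [T 0]) T')) := by
    intro T hT
    by_cases hc : ∃ g, StrictMono g ∧ Accept Bad (s ++ [T 0]) ((T ∘ (fun t => t + 1)) ∘ g)
    · obtain ⟨g, hg, hacc⟩ := hc
      exact ⟨_, (hT.comp (smAdd 1)).comp hg, ⟨g, hg, rfl⟩, Or.inr hacc⟩
    · refine ⟨T ∘ (fun t => t + 1), hT.comp (smAdd 1), ⟨id, strictMono_id, rfl⟩, Or.inl ?_⟩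
      intro g hg hacc
      exact hc ⟨g, hg, hacc⟩
  obtain ⟨T, hT0, hTP, hTR⟩ := exists_seq_of_step (P := StrictMono) M hM hstep
  have chain : ∀ k m, k < m → ∃ h, StrictMono h ∧ T m = (T k ∘ (fun t => t + 1)) ∘ h := by
    intro k m hkm
    induction m with
    | zero => omega
    | succ m ih =>
      rcases Nat.lt_succ_iff_lt_or_eq.mp hkm with h | rfl
      · obtain ⟨h1, hh1, he1⟩ := ih h
        obtain ⟨h2, hh2, he2⟩ := (hTR m).1
        refine ⟨fun t => h1 (h2 t + 1), hh1.comp ((smAdd 1).comp hh2), ?_⟩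
        funext t
        rw [he2]
        simp only [Function.comp_apply]
        rw [he1]
        rfl
      · exact (hTR k).1
  have chain0 : ∀ m, ∃ h, StrictMono h ∧ T m = T 0 ∘ h := by
    intro m
    rcases Nat.eq_zero_or_pos m with rfl | hm
    · exact ⟨id, strictMono_id, rfl⟩
    · obtain ⟨h, hh, he⟩ := chain 0 m hm
      exact ⟨fun t => h t + 1, (smAdd 1).comp hh, he⟩
  have hnmono : ∀ k m, k < m → T k 0 < T m 0 := by
    intro k m hkm
    obtain ⟨h, hh, he⟩ := chain k m hkm
    rw [he]
    calc T k 0 < T k 1 := (hTP k) Nat.zero_lt_one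
    _ ≤ T k (h 0 + 1) := (hTP k).monotone (by omega)
  set Kept : ℕ → Prop := fun k => Reject Bad (s ++ [T k 0]) (fun t => T k (t + 1)) with hKept
  by_cases hinf : {k | Kept k}.Infinite
  · obtain ⟨φ, hφ, hφK⟩ :=
      extraction_of_frequently_atTop (Nat.frequently_atTop_iff_infinite.mpr hinf)
    have hM' : StrictMono (fun j => T (φ j) 0) := fun a b hab => hnmono _ _ (hφ hab)
    refine ⟨fun j => T (φ j) 0, hM', ?_, ?_⟩
    · refine exists_comp hM hM' (fun j => ?_)
      obtain ⟨h, hh, he⟩ := chain0 (φ j)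
      rw [hT0] at he
      exact ⟨h 0, by show M (h 0) = T (φ j) 0; rw [he]; rfl⟩
    · intro j
      refine reject_of_subseq Bad (hφK j) ((hTP (φ j)).comp (smAdd 1))
        (hM'.comp (smAdd (j + 1))) (fun t => ?_)
      have hlt : φ j < φ (t + (j + 1)) := hφ (by omega)
      obtain ⟨h, hh, he⟩ := chain (φ j) (φ (t + (j + 1))) hlt
      exact ⟨h 0, by show _ = T (φ (t + (j + 1))) 0; rw [he]; rfl⟩
  · exfalso
    rw [Set.not_infinite] at hinf
    obtain ⟨k₀, hk₀⟩ := hinf.bddAbove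
    have hacc : ∀ k, k₀ < k → Accept Bad (s ++ [T k 0]) (T (k + 1)) := by
      intro k hk
      refine ((hTR k).2).resolve_left (fun hK => ?_)
      exact absurd (hk₀ hK) (by omega)
    set L : ℕ → ℕ := fun t => T (k₀ + 1 + t) 0 with hL
    have hLs : StrictMono L := fun a b hab => hnmono _ _ (by omega)
    obtain ⟨g, hg, hLg⟩ := exists_comp hM hLs (fun t => by
      obtain ⟨h, hh, he⟩ := chain0 (k₀ + 1 + t)
      rw [hT0] at he
      exact ⟨h 0, by show M (h 0) = T (k₀ + 1 + t) 0; rw [he]; rfl⟩)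
    have hAS : Accept Bad s L := by
      intro g' hg'
      set P : ℕ → ℕ := fun t => L (g' t) with hP
      have hkh : k₀ < k₀ + 1 + g' 0 := by omega
      have hacc' := hacc (k₀ + 1 + g' 0) hkh
      have hQs : StrictMono (fun t => P (t + 1)) := (hLs.comp hg').comp (smAdd 1)
      have hsub : ∀ t, ∃ i, T (k₀ + 1 + g' 0 + 1) i = P (t + 1) := by
        intro t
        have hg1 : g' 0 + 1 ≤ g' (t + 1) := hg' (by omega)
        rcases eq_or_lt_of_le (show k₀ + 1 + g' 0 + 1 ≤ k₀ + 1 + g' (t + 1) by omega) with he | hlt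
        · exact ⟨0, by rw [hP]; simp only [hL]; rw [he]⟩
        · obtain ⟨h, hh, he⟩ := chain _ _ hlt
          exact ⟨h 0 + 1, by rw [hP]; simp only [hL]; rw [he]; rfl⟩
      obtain ⟨g'', hg'', hQeq⟩ := exists_comp (hTP (k₀ + 1 + g' 0 + 1)) hQs hsub
      have hhit := hacc' g'' hg''
      rw [← hQeq] at hhit
      have hP0 : T (k₀ + 1 + g' 0) 0 = P 0 := rfl
      rw [hP0, ext_snoc, cons'_head_tail] at hhit
      exact hhit
    rw [hLg] at hAS
    exact hrej g hg hAS

lemma rej_future_comp {t : List ℕ} {T g : ℕ → ℕ} (hT : StrictMono T) (hg : StrictMono g)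
    (h : ∀ j, Reject Bad (t ++ [T j]) (fun u => T (u + (j + 1)))) :
    ∀ j, Reject Bad (t ++ [(T ∘ g) j]) (fun u => (T ∘ g) (u + (j + 1))) := by
  intro j
  refine reject_of_subseq Bad (h (g j)) (hT.comp (smAdd (g j + 1)))
    ((hT.comp hg).comp (smAdd (j + 1))) (fun u => ?_)
  have hle : g j + 1 ≤ g (u + (j + 1)) := hg (by omega)
  exact ⟨g (u + (j + 1)) - (g j + 1), by
    show T _ = T (g (u + (j + 1))); congr 1; omega⟩

lemma decide_all (ts : List (List ℕ)) (M : ℕ → ℕ) (hM : StrictMono M)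
    (h : ∀ t ∈ ts, Reject Bad t M) :
    ∃ M', StrictMono M' ∧ (∃ g, StrictMono g ∧ M' = M ∘ g) ∧
      ∀ t ∈ ts, ∀ j : ℕ, Reject Bad (t ++ [M' j]) (fun u => M' (u + (j + 1))) := by
  induction ts with
  | nil => exact ⟨M, hM, ⟨id, strictMono_id, rfl⟩, by simp⟩
  | cons t ts ih =>
    obtain ⟨M₁, hM₁, ⟨g₁, hg₁, hMg₁⟩, hprop₁⟩ := ih (fun u hu => h u (List.mem_cons_of_mem _ hu))
    have hrt : Reject Bad t M₁ := by
      rw [hMg₁]; exact reject_comp Bad (h t (List.mem_cons_self)) hg₁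
    obtain ⟨M₂, hM₂, ⟨g₂, hg₂, hMg₂⟩, hprop₂⟩ := decide_one Bad t M₁ hM₁ hrt
    refine ⟨M₂, hM₂, ⟨g₁ ∘ g₂, hg₁.comp hg₂, by rw [hMg₂, hMg₁]; rfl⟩, ?_⟩
    intro u hu j
    rcases List.mem_cons.mp hu with rfl | hu'
    · exact hprop₂ j
    · have := rej_future_comp Bad hM₁ hg₂ (hprop₁ u hu')
      rw [hMg₂]
      exact this j

lemma sorted_sublist_of_subset : ∀ (l₂ l₁ : List ℕ), l₁.Pairwise (· < ·) → l₂.Pairwise (· < ·) →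
    (∀ a ∈ l₁, a ∈ l₂) → l₁.Sublist l₂ := by
  intro l₂
  induction l₂ with
  | nil =>
    intro l₁ _ _ h
    cases l₁ with
    | nil => exact List.Sublist.refl _
    | cons a t => exact absurd (h a (by simp)) (by simp)
  | cons b l₂' ih =>
    intro l₁ h₁ h₂ hsub
    cases l₁ with
    | nil => exact List.nil_sublist _
    | cons a t =>
      have h₁' := List.pairwise_cons.mp h₁
      have h₂' := List.pairwise_cons.mp h₂
      rcases eq_or_ne a b with rfl | hne
      · refine List.Sublist.cons₂ _ (ih t h₁'.2 h₂'.2 ?_)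
        intro c hc
        have hac : a < c := h₁'.1 c hc
        rcases List.mem_cons.mp (hsub c (List.mem_cons_of_mem _ hc)) with rfl | hmem
        · exact absurd hac (lt_irrefl _)
        · exact hmem
      · refine List.Sublist.cons _ (ih (a :: t) h₁ h₂'.2 ?_)
        intro c hc
        rcases List.mem_cons.mp (hsub c hc) with rfl | hmem
        · exfalso
          have hba : c < a := by
            rcases List.mem_cons.mp (hsub a (List.mem_cons_self)) with rfl | hmem'
            · exact absurd rfl hne
            · exact h₂'.1 a hmem'
          rcases List.mem_cons.mp hc with rfl | hct
          · exact absurd rfl hne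
          · exact absurd (h₁'.1 c hct) (by omega)
        · exact hmem

def Pred (Bad : List ℕ → Prop) (p : List ℕ × (ℕ → ℕ)) : Prop :=
  StrictMono p.2 ∧ p.1.Pairwise (· < ·) ∧ (∀ a ∈ p.1, a < p.2 0) ∧
    ∀ t, t.Sublist p.1 → Reject Bad t p.2

lemma fusion_step (p : List ℕ × (ℕ → ℕ)) (hp : Pred Bad p) :
    ∃ q, Pred Bad q ∧ q.1 = p.1 ++ [q.1.getD p.1.length 0] := by
  obtain ⟨F, T⟩ := p
  obtain ⟨hT, hFs, hFlt, hFrej⟩ := hp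
  obtain ⟨T', hT', ⟨g, hg, hTg⟩, hprop⟩ := decide_all Bad F.sublists T hT
    (fun t ht => hFrej t (List.mem_sublists.mp ht))
  have hT0le : T 0 ≤ T' 0 := by rw [hTg]; exact hT.monotone (Nat.zero_le _)
  refine ⟨(F ++ [T' 0], fun u => T' (u + 1)), ⟨hT'.comp (smAdd 1), ?_, ?_, ?_⟩, ?_⟩
  · rw [List.pairwise_append]
    refine ⟨hFs, List.pairwise_singleton _ _, fun a ha b hb => ?_⟩
    simp only [List.mem_singleton] at hb
    subst hb
    exact lt_of_lt_of_le (hFlt a ha) hT0le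
  · intro a ha
    rcases List.mem_append.mp ha with h | h
    · exact lt_trans (lt_of_lt_of_le (hFlt a h) hT0le) (hT' (by omega))
    · simp only [List.mem_singleton] at h
      subst h
      exact hT' (by omega)
  · intro t ht
    rcases List.sublist_append_iff.mp ht with ⟨t₁, t₂, rfl, ht₁, ht₂⟩
    rcases List.sublist_singleton.mp ht₂ with rfl | rfl
    · rw [List.append_nil]
      have : Reject Bad t₁ T' := by rw [hTg]; exact reject_comp Bad (hFrej t₁ ht₁) hg
      show Reject Bad t₁ (T' ∘ fun u => u + 1)
      exact reject_comp Bad this (smAdd 1)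
    · exact hprop t₁ (List.mem_sublists.mpr ht₁) 0
  · show F ++ [T' 0] = F ++ [(F ++ [T' 0]).getD F.length 0]
    congr 1
    rw [List.getD_eq_getElem _ _ (by simp), List.getElem_append_right (by simp)]
    simp

lemma fusion (M₀ : ℕ → ℕ) (hM₀ : StrictMono M₀) (hrej : Reject Bad [] M₀) :
    ∃ e : ℕ → ℕ, StrictMono e ∧ ∀ g : ℕ → ℕ, StrictMono g → ¬ Hit Bad (e ∘ g) := by
  classical
  obtain ⟨f, hf0, hfP, hfR⟩ := exists_seq_of_step (P := Pred Bad)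
    (R := fun p q => q.1 = p.1 ++ [q.1.getD p.1.length 0]) ([], M₀)
    ⟨hM₀, List.Pairwise.nil, by simp, fun t ht => by rw [List.sublist_nil.mp ht]; exact hrej⟩
    (fusion_step Bad)
  have hlen : ∀ k, (f k).1.length = k := by
    intro k
    induction k with
    | zero => rw [hf0]; rfl
    | succ k ih => rw [hfR k, List.length_append, ih]; rfl
  have hpre : ∀ k m, k ≤ m → (f k).1 <+: (f m).1 := by
    intro k m hkm
    induction m with
    | zero => rw [Nat.le_zero.mp hkm]
    | succ m ih =>
      rcases Nat.lt_succ_iff_lt_or_eq.mp (Nat.lt_succ_of_le hkm) with h | rfl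
      · exact (ih (by omega)).trans ⟨_, (hfR m).symm⟩
      · rfl
  set e : ℕ → ℕ := fun k => (f (k + 1)).1.getD k 0 with he
  have hgetd : ∀ k m, k < m → (f m).1.getD k 0 = e k := by
    intro k m hkm
    have hp := hpre (k + 1) m hkm
    have h1 : k < (f m).1.length := by rw [hlen]; omega
    have h2 : k < (f (k + 1)).1.length := by rw [hlen]; omega
    show (f m).1.getD k 0 = (f (k + 1)).1.getD k 0
    rw [List.getD_eq_getElem _ _ h1, List.getD_eq_getElem _ _ h2]
    exact (hp.getElem h2).symm
  have hmem : ∀ k m, k < m → e k ∈ (f m).1 := by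
    intro k m hkm
    rw [← hgetd k m hkm, List.getD_eq_getElem _ _ (by rw [hlen]; omega)]
    exact List.getElem_mem _
  have hes : StrictMono e := by
    apply strictMono_nat_of_lt_succ
    intro k
    have h1 := hgetd k (k + 2) (by omega)
    have h2 : e (k + 1) = (f (k + 2)).1.getD (k + 1) 0 := rfl
    have hs : (f (k + 2)).1.Pairwise (· < ·) := (hfP (k + 2)).2.1
    have hk1 : k + 1 < (f (k + 2)).1.length := by rw [hlen]; omega
    have hk : k < (f (k + 2)).1.length := by rw [hlen]; omega
    rw [← h1, h2, List.getD_eq_getElem _ _ hk, List.getD_eq_getElem _ _ hk1]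
    have := hs.sortedLT.strictMono_get (show (⟨k, hk⟩ : Fin _) < ⟨k + 1, hk1⟩ by
      simp [Fin.lt_def])
    simpa [List.get_eq_getElem] using this
  refine ⟨e, hes, ?_⟩
  intro g hg hHit
  obtain ⟨n, hBad⟩ := hHit
  set s : List ℕ := seg (e ∘ g) n with hsdef
  set K : ℕ := g n + 1 with hK
  have hsub : s.Sublist (f K).1 := by
    refine sorted_sublist_of_subset _ _ (seg_sorted _ (hes.comp hg) n) ((hfP K).2.1) ?_
    intro a ha
    rw [seg_mem] at ha
    obtain ⟨i, hi, rfl⟩ := ha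
    exact hmem _ _ (by have := hg.monotone (show i ≤ n by omega); omega)
  have hrejs := (hfP K).2.2.2 s hsub
  refine hrejs id strictMono_id ?_
  intro g' hg'
  exact ⟨s.length, by rw [seg_ext]; exact hBad⟩

theorem nashWilliams :
    ∃ e : ℕ → ℕ, StrictMono e ∧
      ((∀ g, StrictMono g → Hit Bad (e ∘ g)) ∨ (∀ g, StrictMono g → ¬ Hit Bad (e ∘ g))) := by
  by_cases hacc : ∃ e, StrictMono e ∧ Accept Bad [] e
  · obtain ⟨e, hse, hA⟩ := hacc
    refine ⟨e, hse, Or.inl (fun g hg => ?_)⟩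
    have := hA g hg
    rwa [ext_nil] at this
  · have hrej : Reject Bad [] id := by
      intro g hg hA
      exact hacc ⟨id ∘ g, hg, hA⟩
    obtain ⟨e, hse, hP⟩ := fusion Bad id strictMono_id hrej
    exact ⟨e, hse, Or.inr hP⟩

end


lemma cons'_strictMono {a : ℕ} {f : ℕ → ℕ} (h : a < f 0) (hf : StrictMono f) :
    StrictMono (cons' a f) := by
  apply strictMono_nat_of_lt_succ
  intro n
  cases n with
  | zero => exact h
  | succ n => exact hf (by omega)

section Pairs
variable {S : Type*} (A B : ℕ → Set S)

def altInt : ℕ → List ℕ → Set S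
  | _, [] => Set.univ
  | k, n :: l => (if Even k then A n else B n) ∩ altInt (k + 1) l

lemma mem_altInt {s : S} : ∀ (l : List ℕ) (k : ℕ),
    s ∈ altInt A B k l ↔
      ∀ i, (h : i < l.length) → s ∈ (if Even (k + i) then A (l[i]'h) else B (l[i]'h)) := by
  intro l
  induction l with
  | nil => intro k; simp [altInt]
  | cons n l ih =>
    intro k
    simp only [altInt, Set.mem_inter_iff, ih]
    constructor
    · rintro ⟨h0, h1⟩ i hi
      cases i with
      | zero => simpa using h0
      | succ i =>
        have := h1 i (by simpa using hi)
        rw [show k + 1 + i = k + (i + 1) by omega] at this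
        simpa using this
    · intro h
      refine ⟨by exact h 0 (by simp), fun i hi => ?_⟩
      have := h (i + 1) (by simpa using hi)
      rw [show k + (i + 1) = k + 1 + i by omega] at this
      simpa using this

lemma place (P : ℕ → Prop) : ∀ (l : List ℕ), l.Pairwise (· < ·) → ∀ (r base : ℕ),
    (∀ v ∈ l, base ≤ 2 * v) →
    ∃ g : ℕ → ℕ, StrictMono g ∧ base ≤ g 0 ∧
      ∀ v ∈ l, ∃ q, (Even (q + r) ↔ P v) ∧ g q = 2 * v + 1 := by
  intro l
  induction l with
  | nil =>
    intro _ r base _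
    exact ⟨fun t => t + base, fun a b h => by simpa using h, by show base ≤ 0 + base; omega, by simp⟩
  | cons v l ih =>
    intro hs r base hb
    have hs' := List.pairwise_cons.mp hs
    have hbase : base ≤ 2 * v := hb v (List.mem_cons_self)
    obtain ⟨g', hg', hgb', hgp'⟩ := ih hs'.2 (r + 1) (2 * v + 2)
      (fun w hw => by have := hs'.1 w hw; omega)
    by_cases hP : Even r ↔ P v
    · refine ⟨cons' (2 * v + 1) g', cons'_strictMono (by omega) hg', by
        show base ≤ 2 * v + 1; omega, ?_⟩
      intro w hw
      rcases List.mem_cons.mp hw with rfl | hw'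
      · exact ⟨0, by simpa using hP, rfl⟩
      · obtain ⟨q, hq1, hq2⟩ := hgp' w hw'
        refine ⟨q + 1, ?_, hq2⟩
        rw [show q + 1 + r = q + (r + 1) by omega]
        exact hq1
    · obtain ⟨g'', hg'', hgb'', hgp''⟩ := ih hs'.2 r (2 * v + 2)
        (fun w hw => by have := hs'.1 w hw; omega)
      refine ⟨cons' (2 * v) (cons' (2 * v + 1) g''),
        cons'_strictMono (by show 2*v < 2*v+1; omega) (cons'_strictMono (by omega) hg''),
        by show base ≤ 2 * v; omega, ?_⟩
      intro w hw
      rcases List.mem_cons.mp hw with rfl | hw'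
      · refine ⟨1, ?_, rfl⟩
        rw [show 1 + r = r + 1 by omega, Nat.even_add_one]
        tauto
      · obtain ⟨q, hq1, hq2⟩ := hgp'' w hw'
        refine ⟨q + 2, ?_, hq2⟩
        rw [show q + 2 + r = (q + r) + 1 + 1 by omega, Nat.even_add_one, Nat.even_add_one]
        simpa using hq1

lemma placement (F G : Finset ℕ) (hd : Disjoint F G) :
    ∃ g : ℕ → ℕ, StrictMono g ∧
      (∀ i ∈ F, ∃ q, Even q ∧ g q = 2 * i + 1 ∧ q ≤ 2 * i + 1) ∧
      (∀ j ∈ G, ∃ q, ¬ Even q ∧ g q = 2 * j + 1 ∧ q ≤ 2 * j + 1) := by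
  classical
  obtain ⟨g, hg, _, hp⟩ := place (· ∈ F) ((F ∪ G).sort (· ≤ ·))
    (Finset.sortedLT_sort _).pairwise 0 0 (by simp)
  refine ⟨g, hg, fun i hi => ?_, fun j hj => ?_⟩
  · obtain ⟨q, hq1, hq2⟩ := hp i (by rw [Finset.mem_sort]; exact Finset.mem_union_left _ hi)
    have : Even q := by simpa [hi] using hq1
    exact ⟨q, this, hq2, hq2 ▸ hg.le_apply⟩
  · obtain ⟨q, hq1, hq2⟩ := hp j (by rw [Finset.mem_sort]; exact Finset.mem_union_right _ hj)
    have hjF : j ∉ F := Finset.disjoint_right.mp hd hj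
    have : ¬ Even q := by simpa [hjF] using hq1
    exact ⟨q, this, hq2, hq2 ▸ hg.le_apply⟩

lemma pairsDichotomy :
    ∃ e : ℕ → ℕ, StrictMono e ∧
      ((∀ F G : Finset ℕ, Disjoint F G →
          ((⋂ i ∈ F, A (e i)) ∩ ⋂ j ∈ G, B (e j)).Nonempty) ∨
       (∀ s : S, ¬ ({n | s ∈ A (e n)}.Infinite ∧ {n | s ∈ B (e n)}.Infinite))) := by
  classical
  obtain ⟨e0, he0, hdi⟩ := nashWilliams (fun l => altInt A B 0 l = ∅)
  rcases hdi with hall | hnone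
  · refine ⟨e0, he0, Or.inr ?_⟩
    rintro s ⟨hPA, hPB⟩
    have hstep : ∀ p : ℕ × ℕ, (s ∈ (if Even p.1 then A (e0 p.2) else B (e0 p.2))) →
        ∃ q : ℕ × ℕ, (s ∈ (if Even q.1 then A (e0 q.2) else B (e0 q.2))) ∧
          (q.1 = p.1 + 1 ∧ p.2 < q.2) := by
      rintro ⟨k, m⟩ _
      by_cases hk : Even (k + 1)
      · obtain ⟨b, hb, hbm⟩ := hPA.exists_gt m
        exact ⟨(k + 1, b), by simpa [hk] using hb, rfl, hbm⟩
      · obtain ⟨b, hb, hbm⟩ := hPB.exists_gt m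
        exact ⟨(k + 1, b), by simpa [hk] using hb, rfl, hbm⟩
    obtain ⟨n₀, hn₀⟩ := hPA.nonempty
    obtain ⟨f, hf0, hfP, hfR⟩ := exists_seq_of_step ((0 : ℕ), n₀)
      (by simpa using hn₀) hstep
    have hidx : ∀ t, (f t).1 = t := by
      intro t
      induction t with
      | zero => rw [hf0]
      | succ t ih => rw [(hfR t).1, ih]
    set g : ℕ → ℕ := fun t => (f t).2 with hgdef
    have hg : StrictMono g := strictMono_nat_of_lt_succ (fun t => (hfR t).2)
    have := hall g hg
    rw [hit_def] at this
    obtain ⟨n, hbad⟩ := this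
    have hsmem : s ∈ altInt A B 0 (seg (e0 ∘ g) n) := by
      rw [mem_altInt]
      intro i hi
      have hlen : i < n := by rw [seg_length] at hi; exact hi
      have hget : (seg (e0 ∘ g) n)[i]'hi = e0 (g i) := seg_get _ _ _ hlen
      rw [hget]
      have := hfP i
      rw [hidx i] at this
      simpa using this
    rw [hbad] at hsmem
    exact hsmem
  · refine ⟨fun i => e0 (2 * i + 1), he0.comp (fun a b h => by omega), Or.inl ?_⟩
    intro F G hd
    obtain ⟨g, hg, hF, hG⟩ := placement F G hd
    have hnb := hnone g hg
    rw [hit_def] at hnb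
    push_neg at hnb
    set N := 2 * ((F ∪ G).sup id) + 2 with hN
    obtain ⟨s, hs⟩ := hnb N
    rw [mem_altInt] at hs
    refine ⟨s, Set.mem_inter ?_ ?_⟩
    · rw [Set.mem_iInter₂]
      intro i hi
      obtain ⟨q, hq1, hq2, hq3⟩ := hF i hi
      have hiN : q < N := by
        have : i ≤ (F ∪ G).sup id := Finset.le_sup (f := id) (Finset.mem_union_left _ hi)
        omega
      have := hs q (by rw [seg_length]; exact hiN)
      rw [seg_get _ _ _ hiN] at this
      simp only [Function.comp_apply] at this
      rw [hq2] at this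
      simpa [hq1, Nat.zero_add] using this
    · rw [Set.mem_iInter₂]
      intro j hj
      obtain ⟨q, hq1, hq2, hq3⟩ := hG j hj
      have hjN : q < N := by
        have : j ≤ (F ∪ G).sup id := Finset.le_sup (f := id) (Finset.mem_union_right _ hj)
        omega
      have := hs q (by rw [seg_length]; exact hjN)
      rw [seg_get _ _ _ hjN] at this
      simp only [Function.comp_apply] at this
      rw [hq2] at this
      simpa [hq1, Nat.zero_add] using this

end Pairs

section Banach
variable {X : Type*} [NormedAddCommGroup X] [NormedSpace ℝ X]

lemma inf_shift {p : ℕ → Prop} (c : ℕ) (h : {n | p n}.Infinite) : {t | p (t + c)}.Infinite := by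
  by_contra hfin
  rw [Set.not_infinite] at hfin
  have hsub : {n | p n} ⊆ (fun t => t + c) '' {t | p (t + c)} ∪ {n | n < c} := by
    intro n hn
    by_cases hnc : n < c
    · exact Or.inr hnc
    · refine Or.inl ⟨n - c, by
        simpa [Nat.sub_add_cancel (not_lt.mp hnc)] using hn, ?_⟩
      show n - c + c = n
      omega
  exact h (((hfin.image _).union (Set.finite_lt_nat c)).subset hsub)

lemma indep_to_l1 (x : ℕ → X) (M : ℝ) (hM : ∀ n, ‖x n‖ ≤ M) (r r' : ℝ) (hrr : r < r')
    (hind : ∀ F G : Finset ℕ, Disjoint F G →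
      ((⋂ i ∈ F, {f : X →L[ℝ] ℝ | ‖f‖ ≤ 1 ∧ f (x i) < r}) ∩
        ⋂ j ∈ G, {f : X →L[ℝ] ℝ | ‖f‖ ≤ 1 ∧ r' < f (x j)}).Nonempty) :
    IsEquivL1Basis x := by
  classical
  have hM0 : 0 ≤ M := le_trans (norm_nonneg _) (hM 0)
  refine ⟨(r' - r) / 2, M + 1, by linarith, by linarith, ?_⟩
  intro n a
  constructor
  · rcases Nat.eq_zero_or_pos n with rfl | hn
    · simp
    set Fneg : Finset ℕ := (Finset.univ.filter (fun i : Fin n => a i < 0)).image Fin.val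
      with hFneg
    set Gpos : Finset ℕ := (Finset.univ.filter (fun i : Fin n => 0 ≤ a i)).image Fin.val
      with hGpos
    have hmemF : ∀ i : Fin n, (i : ℕ) ∈ Fneg ↔ a i < 0 := by
      intro i
      simp only [hFneg, Finset.mem_image, Finset.mem_filter, Finset.mem_univ, true_and]
      constructor
      · rintro ⟨j, hj, hji⟩
        rwa [← Fin.val_inj.mp hji]
      · intro h; exact ⟨i, h, rfl⟩
    have hmemG : ∀ i : Fin n, (i : ℕ) ∈ Gpos ↔ 0 ≤ a i := by
      intro i
      simp only [hGpos, Finset.mem_image, Finset.mem_filter, Finset.mem_univ, true_and]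
      constructor
      · rintro ⟨j, hj, hji⟩
        rwa [← Fin.val_inj.mp hji]
      · intro h; exact ⟨i, h, rfl⟩
    have hdisj : Disjoint Fneg Gpos := by
      rw [Finset.disjoint_left]
      rintro m hmF hmG
      simp only [hFneg, hGpos, Finset.mem_image, Finset.mem_filter, Finset.mem_univ,
        true_and] at hmF hmG
      obtain ⟨i, hi, rfl⟩ := hmF
      obtain ⟨j, hj, hji⟩ := hmG
      rw [Fin.val_inj.mp hji] at hj
      exact absurd hj (not_le.mpr hi)
    obtain ⟨fp, hfp⟩ := hind Fneg Gpos hdisj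
    obtain ⟨fm, hfm⟩ := hind Gpos Fneg hdisj.symm
    rw [Set.mem_inter_iff, Set.mem_iInter₂, Set.mem_iInter₂] at hfp hfm
    have hfpA : ∀ i : Fin n, a i < 0 → fp (x ↑i) < r :=
      fun i hi => (hfp.1 ↑i ((hmemF i).mpr hi)).2
    have hfpB : ∀ i : Fin n, 0 ≤ a i → r' < fp (x ↑i) :=
      fun i hi => (hfp.2 ↑i ((hmemG i).mpr hi)).2
    have hfmA : ∀ i : Fin n, 0 ≤ a i → fm (x ↑i) < r :=
      fun i hi => (hfm.1 ↑i ((hmemG i).mpr hi)).2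
    have hfmB : ∀ i : Fin n, a i < 0 → r' < fm (x ↑i) :=
      fun i hi => (hfm.2 ↑i ((hmemF i).mpr hi)).2
    have hfpn : ‖fp‖ ≤ 1 := by
      rcases le_or_gt 0 (a ⟨0, hn⟩) with h | h
      · exact (hfp.2 _ ((hmemG _).mpr h)).1
      · exact (hfp.1 _ ((hmemF _).mpr h)).1
    have hfmn : ‖fm‖ ≤ 1 := by
      rcases le_or_gt 0 (a ⟨0, hn⟩) with h | h
      · exact (hfm.1 _ ((hmemG _).mpr h)).1
      · exact (hfm.2 _ ((hmemF _).mpr h)).1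
    set y : X := ∑ i : Fin n, a i • x ↑i with hy
    have hfp_y : fp y = ∑ i : Fin n, a i * fp (x ↑i) := by
      rw [hy, map_sum]
      exact Finset.sum_congr rfl fun i _ => by rw [map_smul]; rfl
    have hfm_y : fm y = ∑ i : Fin n, a i * fm (x ↑i) := by
      rw [hy, map_sum]
      exact Finset.sum_congr rfl fun i _ => by rw [map_smul]; rfl
    have key : ∀ i : Fin n, (r' - r) * |a i| ≤ a i * fp (x ↑i) - a i * fm (x ↑i) := by
      intro i
      rcases le_or_gt 0 (a i) with h | h
      · have h1 := hfpB i h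
        have h2 := hfmA i h
        rw [abs_of_nonneg h]
        nlinarith
      · have h1 := hfpA i h
        have h2 := hfmB i h
        rw [abs_of_neg h]
        nlinarith
    have hsum : (r' - r) * ∑ i : Fin n, |a i| ≤ fp y - fm y := by
      rw [hfp_y, hfm_y, ← Finset.sum_sub_distrib, Finset.mul_sum]
      exact Finset.sum_le_sum fun i _ => key i
    have h1 : fp y ≤ ‖y‖ := by
      calc fp y ≤ |fp y| := le_abs_self _
      _ = ‖fp y‖ := (Real.norm_eq_abs _).symm
      _ ≤ ‖fp‖ * ‖y‖ := fp.le_opNorm y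
      _ ≤ 1 * ‖y‖ := mul_le_mul_of_nonneg_right hfpn (norm_nonneg y)
      _ = ‖y‖ := one_mul _
    have h2 : -‖y‖ ≤ fm y := by
      have : |fm y| ≤ ‖y‖ := by
        calc |fm y| = ‖fm y‖ := (Real.norm_eq_abs _).symm
        _ ≤ ‖fm‖ * ‖y‖ := fm.le_opNorm y
        _ ≤ 1 * ‖y‖ := mul_le_mul_of_nonneg_right hfmn (norm_nonneg y)
        _ = ‖y‖ := one_mul _
      linarith [neg_abs_le (fm y)]
    linarith
  · calc ‖∑ i : Fin n, a i • x ↑i‖ ≤ ∑ i : Fin n, ‖a i • x ↑i‖ := norm_sum_le _ _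
    _ ≤ ∑ i : Fin n, |a i| * (M + 1) := Finset.sum_le_sum fun i _ => by
        rw [norm_smul, Real.norm_eq_abs]
        exact mul_le_mul_of_nonneg_left (by linarith [hM (i : ℕ)]) (abs_nonneg _)
    _ = (M + 1) * ∑ i : Fin n, |a i| := by rw [← Finset.sum_mul, mul_comm]

def ConvPair (x : ℕ → X) (d : ℕ → ℕ) (q : ℚ × ℚ) : Prop :=
  (q.1 : ℝ) < (q.2 : ℝ) → ∀ f : X →L[ℝ] ℝ, ‖f‖ ≤ 1 →
    ¬ ({n | f (x (d n)) < (q.1 : ℝ)}.Infinite ∧ {n | (q.2 : ℝ) < f (x (d n))}.Infinite)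

lemma step_lemma {A : Set X} {x : ℕ → X} (hx : ∀ n, x n ∈ A) {M : ℝ}
    (hM : ∀ a ∈ A, ‖a‖ ≤ M)
    (hwp : ∀ y : ℕ → X, (∀ n, y n ∈ A) → ¬ IsEquivL1Basis y) (d : ℕ → ℕ) (q : ℚ × ℚ) :
    ∃ h : ℕ → ℕ, StrictMono h ∧ ConvPair x (d ∘ h) q := by
  by_cases hq : (q.1 : ℝ) < (q.2 : ℝ)
  · obtain ⟨e, he, hdi⟩ := pairsDichotomy (S := X →L[ℝ] ℝ)
      (fun n => {f | ‖f‖ ≤ 1 ∧ f (x (d n)) < (q.1 : ℝ)})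
      (fun n => {f | ‖f‖ ≤ 1 ∧ (q.2 : ℝ) < f (x (d n))})
    rcases hdi with hind | hconv
    · exfalso
      refine hwp (x ∘ d ∘ e) (fun n => hx _) ?_
      exact indep_to_l1 (x ∘ d ∘ e) M (fun n => hM _ (hx _)) q.1 q.2 hq hind
    · refine ⟨e, he, fun _ f hf hcon => hconv f ⟨?_, ?_⟩⟩
      · have : {n | f (x (d (e n))) < (q.1 : ℝ)} =
            {n | f ∈ {g : X →L[ℝ] ℝ | ‖g‖ ≤ 1 ∧ g (x (d (e n))) < (q.1 : ℝ)}} := by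
          ext n; simp [hf]
        rw [← this]
        exact hcon.1
      · have : {n | (q.2 : ℝ) < f (x (d (e n)))} =
            {n | f ∈ {g : X →L[ℝ] ℝ | ‖g‖ ≤ 1 ∧ (q.2 : ℝ) < g (x (d (e n)))}} := by
          ext n; simp [hf]
        rw [← this]
        exact hcon.2
  · exact ⟨id, strictMono_id, fun h => absurd h hq⟩

lemma forward {A : Set X} (hA : IsBounded A)
    (hwp : ∀ y : ℕ → X, (∀ n, y n ∈ A) → ¬ IsEquivL1Basis y)
    (x : ℕ → X) (hx : ∀ n, x n ∈ A) :
    ∃ φ : ℕ → ℕ, StrictMono φ ∧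
      ∀ f : X →L[ℝ] ℝ, ∃ l : ℝ, Tendsto (fun n => f (x (φ n))) atTop (𝓝 l) := by
  classical
  obtain ⟨M, hM⟩ := isBounded_iff_forall_norm_le.mp hA
  set ρ : ℕ → ℚ × ℚ := fun k => (Denumerable.eqv (ℚ × ℚ)).symm k with hρ
  obtain ⟨st, hst0, hstP, hstR⟩ := exists_seq_of_step
    (P := fun p : ℕ × (ℕ → ℕ) => StrictMono p.2)
    (R := fun p p' => p'.1 = p.1 + 1 ∧ (∃ h, StrictMono h ∧ p'.2 = p.2 ∘ h) ∧
      ConvPair x p'.2 (ρ p.1))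
    ((0 : ℕ), id) strictMono_id
    (by
      rintro ⟨k, d⟩ hd
      obtain ⟨h, hh, hcp⟩ := step_lemma hx hM hwp d (ρ k)
      exact ⟨(k + 1, d ∘ h), hd.comp hh, rfl, ⟨h, hh, rfl⟩, hcp⟩)
  have hidx : ∀ k, (st k).1 = k := by
    intro k
    induction k with
    | zero => rw [hst0]
    | succ k ih => rw [(hstR k).1, ih]
  set D : ℕ → ℕ → ℕ := fun k => (st k).2 with hD
  have hDs : ∀ k, StrictMono (D k) := fun k => hstP k
  have hconvD : ∀ k, ConvPair x (D (k + 1)) (ρ k) := by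
    intro k
    have := (hstR k).2.2
    rwa [hidx k] at this
  have hchainD : ∀ k m, k ≤ m → ∃ h, StrictMono h ∧ D m = D k ∘ h := by
    intro k m hkm
    induction m with
    | zero =>
      obtain rfl := Nat.le_zero.mp hkm
      exact ⟨id, strictMono_id, rfl⟩
    | succ m ih =>
      rcases Nat.lt_succ_iff_lt_or_eq.mp (Nat.lt_succ_of_le hkm) with h | rfl
      · obtain ⟨h1, hh1, he1⟩ := ih (by omega)
        obtain ⟨h2, hh2, he2⟩ := (hstR m).2.1
        have he2' : D (m + 1) = D m ∘ h2 := he2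
        refine ⟨h1 ∘ h2, hh1.comp hh2, ?_⟩
        rw [he2', he1]
        rfl
      · exact ⟨id, strictMono_id, rfl⟩
  set φ : ℕ → ℕ := fun k => D (k + 1) k with hφ
  have hφs : StrictMono φ := by
    apply strictMono_nat_of_lt_succ
    intro k
    obtain ⟨h, hh, he⟩ := (hstR (k + 1)).2.1
    show D (k + 1) k < D (k + 2) (k + 1)
    rw [show D (k + 2) = (st (k + 2)).2 from rfl, he]
    calc D (k + 1) k < D (k + 1) (k + 1) := hDs (k + 1) (by omega)
    _ ≤ D (k + 1) (h (k + 1)) := (hDs (k + 1)).monotone hh.le_apply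
    _ = ((st (k + 1)).2 ∘ h) (k + 1) := rfl
  have htail : ∀ k, ∃ u, StrictMono u ∧ (fun t => φ (t + (k + 1))) = D (k + 1) ∘ u := by
    intro k
    refine exists_comp (hDs (k + 1)) (hφs.comp (smAdd (k + 1))) (fun t => ?_)
    obtain ⟨h, hh, he⟩ := hchainD (k + 1) (t + (k + 1) + 1) (by omega)
    exact ⟨h (t + (k + 1)), by
      show D (k + 1) _ = D (t + (k + 1) + 1) (t + (k + 1)); rw [he]; rfl⟩
  have hconvφ : ∀ q : ℚ × ℚ, ConvPair x φ q := by
    intro q hq f hf hcon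
    obtain ⟨k, hρk0⟩ := (Denumerable.eqv (ℚ × ℚ)).symm.surjective q
    have hρk : ρ k = q := hρk0
    have hCP := hconvD k
    rw [hρk] at hCP
    obtain ⟨u, hu, hue⟩ := htail k
    have h1 : {t | f (x (φ (t + (k + 1)))) < (q.1 : ℝ)}.Infinite := inf_shift _ hcon.1
    have h2 : {t | (q.2 : ℝ) < f (x (φ (t + (k + 1))))}.Infinite := inf_shift _ hcon.2
    have he1 : ∀ t, φ (t + (k + 1)) = D (k + 1) (u t) := fun t => congrFun hue t
    refine hCP hq f hf ⟨?_, ?_⟩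
    · have : u '' {t | f (x (φ (t + (k + 1)))) < (q.1 : ℝ)} ⊆
          {n | f (x (D (k + 1) n)) < (q.1 : ℝ)} := by
        rintro _ ⟨t, ht, rfl⟩
        simpa [← he1 t] using ht
      exact Set.Infinite.mono this ((h1.image (hu.injective.injOn)))
    · have : u '' {t | (q.2 : ℝ) < f (x (φ (t + (k + 1))))} ⊆
          {n | (q.2 : ℝ) < f (x (D (k + 1) n))} := by
        rintro _ ⟨t, ht, rfl⟩
        simpa [← he1 t] using ht
      exact Set.Infinite.mono this ((h2.image (hu.injective.injOn)))
  refine ⟨φ, hφs, ?_⟩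
  intro f
  rcases eq_or_ne f 0 with rfl | hf0
  · exact ⟨0, by simpa using tendsto_const_nhds⟩
  have hc : (0 : ℝ) < ‖f‖ := norm_pos_iff.mpr hf0
  set g : X →L[ℝ] ℝ := ‖f‖⁻¹ • f with hg
  have hg1 : ‖g‖ ≤ 1 := by
    have : ‖g‖ = ‖f‖⁻¹ * ‖f‖ := by rw [hg, norm_smul (α := ℝ) (β := X →L[ℝ] ℝ), norm_inv, norm_norm]
    rw [this, inv_mul_cancel₀ hc.ne']
  set t : ℕ → ℝ := fun m => g (x (φ m)) with ht
  have hbd : ∀ m, |t m| ≤ M := by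
    intro m
    calc |t m| = ‖g (x (φ m))‖ := (Real.norm_eq_abs _).symm
    _ ≤ ‖g‖ * ‖x (φ m)‖ := g.le_opNorm _
    _ ≤ 1 * M := mul_le_mul hg1 (hM _ (hx _)) (norm_nonneg _) zero_le_one
    _ = M := one_mul M
  have hbdd1 : IsBoundedUnder (· ≤ ·) atTop t :=
    isBoundedUnder_of ⟨M, fun m => (abs_le.mp (hbd m)).2⟩
  have hbdd2 : IsBoundedUnder (· ≥ ·) atTop t :=
    isBoundedUnder_of ⟨-M, fun m => (abs_le.mp (hbd m)).1⟩
  have hlimeq : liminf t atTop = limsup t atTop := by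
    by_contra hne
    have hlt : liminf t atTop < limsup t atTop :=
      lt_of_le_of_ne (liminf_le_limsup hbdd1 hbdd2) hne
    obtain ⟨q1, hq1a, hq1b⟩ := exists_rat_btwn hlt
    obtain ⟨q2, hq2a, hq2b⟩ := exists_rat_btwn hq1b
    have h1 : {m | t m < (q1 : ℝ)}.Infinite :=
      Nat.frequently_atTop_iff_infinite.mp
        (frequently_lt_of_liminf_lt hbdd1.isCoboundedUnder_ge hq1a)
    have h2 : {m | (q2 : ℝ) < t m}.Infinite :=
      Nat.frequently_atTop_iff_infinite.mp
        (frequently_lt_of_lt_limsup hbdd2.isCoboundedUnder_le hq2b)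
    exact hconvφ (q1, q2) (by exact_mod_cast hq2a) g hg1 ⟨h1, h2⟩
  have htt : Tendsto t atTop (𝓝 (liminf t atTop)) :=
    tendsto_of_liminf_eq_limsup rfl hlimeq.symm hbdd1 hbdd2
  refine ⟨‖f‖ * liminf t atTop, ?_⟩
  have heq : ∀ m, f (x (φ m)) = ‖f‖ * t m := by
    intro m
    rw [ht]
    show f (x (φ m)) = ‖f‖ * ((‖f‖⁻¹ • f) (x (φ m)))
    rw [ContinuousLinearMap.smul_apply, smul_eq_mul]
    field_simp
  have := htt.const_mul ‖f‖
  simpa [← heq] using this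

end Banach

variable {X : Type*} [NormedAddCommGroup X] [NormedSpace ℝ X]

lemma backward (x : ℕ → X) (φ : ℕ → ℕ) (hφ : StrictMono φ) (hl1 : IsEquivL1Basis x)
    (hwc : ∀ f : X →L[ℝ] ℝ, ∃ l : ℝ, Tendsto (fun n => f (x (φ n))) atTop (𝓝 l)) :
    False := by
  classical
  obtain ⟨c, C, hc, hC, hb⟩ := hl1
  set T : (ℕ →₀ ℝ) →ₗ[ℝ] X := Finsupp.linearCombination ℝ x with hT
  have hTa : ∀ a : ℕ →₀ ℝ, T a = ∑ i ∈ a.support, a i • x i := by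
    intro a
    rw [hT, Finsupp.linearCombination_apply, Finsupp.sum]
  have key : ∀ a : ℕ →₀ ℝ, c * (∑ i ∈ a.support, |a i|) ≤ ‖T a‖ := by
    intro a
    set n : ℕ := (a.support.sup id) + 1 with hn
    have hsupp : a.support ⊆ Finset.range n := by
      intro i hi
      rw [Finset.mem_range, hn]
      have : id i ≤ a.support.sup id := Finset.le_sup hi
      simp only [id_eq] at this
      omega
    have e1 : ∑ i : Fin n, a ↑i • x ↑i = T a := by
      rw [hTa, Fin.sum_univ_eq_sum_range (fun i => a i • x i) n]
      exact (Finset.sum_subset hsupp (fun i _ hnot => by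
        rw [Finsupp.notMem_support_iff.mp hnot, zero_smul])).symm
    have e2 : ∑ i : Fin n, |a ↑i| = ∑ i ∈ a.support, |a i| := by
      rw [Fin.sum_univ_eq_sum_range (fun i => |a i|) n]
      exact (Finset.sum_subset hsupp (fun i _ hnot => by
        rw [Finsupp.notMem_support_iff.mp hnot, abs_zero])).symm
    have := (hb n (fun i => a ↑i)).1
    rw [e1, e2] at this
    exact this
  have hinj : Function.Injective T := by
    have hkz : ∀ a : ℕ →₀ ℝ, T a = 0 → a = 0 := by
      intro a ha
      have h1 := key a
      rw [ha, norm_zero] at h1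
      have h2 : ∑ i ∈ a.support, |a i| ≤ 0 := by
        by_contra hcon
        push_neg at hcon
        nlinarith
      have h3 : ∑ i ∈ a.support, |a i| = 0 :=
        le_antisymm h2 (Finset.sum_nonneg fun i _ => abs_nonneg _)
      have h4 := (Finset.sum_eq_zero_iff_of_nonneg (fun i _ => abs_nonneg (a i))).mp h3
      ext m
      by_cases hm : m ∈ a.support
      · exact abs_eq_zero.mp (h4 m hm)
      · simpa using Finsupp.notMem_support_iff.mp hm
    intro a b hab
    have : T (a - b) = 0 := by rw [map_sub, hab, sub_self]
    have := hkz _ this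
    exact sub_eq_zero.mp this
  set ε : ℕ → ℝ := fun m => if h : ∃ k, φ k = m then (-1 : ℝ) ^ (h.choose) else 0 with hε
  have hεφ : ∀ k, ε (φ k) = (-1 : ℝ) ^ k := by
    intro k
    have hex : ∃ k', φ k' = φ k := ⟨k, rfl⟩
    rw [hε]
    simp only [dif_pos hex]
    congr 1
    exact hφ.injective hex.choose_spec
  have hε1 : ∀ m, |ε m| ≤ 1 := by
    intro m
    rw [hε]
    by_cases h : ∃ k, φ k = m
    · simp only [dif_pos h, abs_pow, abs_neg, abs_one, one_pow, le_refl]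
    · simp [dif_neg h]
  set hmap : (ℕ →₀ ℝ) →ₗ[ℝ] ℝ := Finsupp.linearCombination ℝ ε with hhmap
  have habs : ∀ a : ℕ →₀ ℝ, |hmap a| ≤ c⁻¹ * ‖T a‖ := by
    intro a
    have h1 : hmap a = ∑ i ∈ a.support, a i * ε i := by
      rw [hhmap, Finsupp.linearCombination_apply, Finsupp.sum]
      exact Finset.sum_congr rfl fun i _ => rfl
    have h2 : |∑ i ∈ a.support, a i * ε i| ≤ ∑ i ∈ a.support, |a i| := by
      refine le_trans (Finset.abs_sum_le_sum_abs _ _) (Finset.sum_le_sum fun i _ => ?_)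
      rw [abs_mul]
      exact mul_le_of_le_one_right (abs_nonneg _) (hε1 i)
    have h3 : ∑ i ∈ a.support, |a i| ≤ c⁻¹ * ‖T a‖ := by
      have h4 := key a
      have h5 : c⁻¹ * (c * ∑ i ∈ a.support, |a i|) ≤ c⁻¹ * ‖T a‖ :=
        mul_le_mul_of_nonneg_left h4 (inv_nonneg.mpr hc.le)
      rwa [← mul_assoc, inv_mul_cancel₀ hc.ne', one_mul] at h5
    rw [h1]
    exact le_trans h2 h3
  set p : Subspace ℝ X := LinearMap.range T with hp
  set equiv : (ℕ →₀ ℝ) ≃ₗ[ℝ] p := LinearEquiv.ofInjective T hinj with hequiv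
  set galg : p →ₗ[ℝ] ℝ := hmap ∘ₗ (equiv.symm : p ≃ₗ[ℝ] (ℕ →₀ ℝ)).toLinearMap with hgalg
  have hgb : ∀ y : p, ‖galg y‖ ≤ c⁻¹ * ‖y‖ := by
    intro y
    have hyT : (y : X) = T (equiv.symm y) := by
      conv_lhs => rw [← equiv.apply_symm_apply y]
      rw [hequiv, LinearEquiv.ofInjective_apply]
    have : galg y = hmap (equiv.symm y) := rfl
    rw [this, Real.norm_eq_abs]
    calc |hmap (equiv.symm y)| ≤ c⁻¹ * ‖T (equiv.symm y)‖ := habs _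
    _ = c⁻¹ * ‖y‖ := by rw [← hyT]; rfl
  set G : p →L[ℝ] ℝ := LinearMap.mkContinuous galg c⁻¹ hgb with hG
  obtain ⟨F, hF, _⟩ := exists_extension_norm_eq p G
  have hFx : ∀ k, F (x (φ k)) = (-1 : ℝ) ^ k := by
    intro k
    set s : ℕ →₀ ℝ := Finsupp.single (φ k) (1 : ℝ) with hs
    have hTs : T s = x (φ k) := by
      rw [hT, hs, Finsupp.linearCombination_single, one_smul]
    have hmem : x (φ k) ∈ p := ⟨s, hTs⟩
    have h1 : F (x (φ k)) = G ⟨x (φ k), hmem⟩ := hF ⟨x (φ k), hmem⟩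
    have h2 : equiv.symm ⟨x (φ k), hmem⟩ = s := by
      rw [LinearEquiv.symm_apply_eq]
      refine Subtype.ext ?_
      rw [hequiv, LinearEquiv.ofInjective_apply, hTs]
    have h3 : G ⟨x (φ k), hmem⟩ = hmap (equiv.symm ⟨x (φ k), hmem⟩) := rfl
    rw [h1, h3, h2, hhmap, hs, Finsupp.linearCombination_single, smul_eq_mul, one_mul]
    exact hεφ k
  obtain ⟨l, hl⟩ := hwc F
  have heven : Tendsto (fun j => F (x (φ (2 * j)))) atTop (𝓝 l) :=
    hl.comp (tendsto_atTop_atTop.mpr fun b => ⟨b, fun a ha => by omega⟩)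
  have hodd : Tendsto (fun j => F (x (φ (2 * j + 1)))) atTop (𝓝 l) :=
    hl.comp (tendsto_atTop_atTop.mpr fun b => ⟨b, fun a ha => by omega⟩)
  have he1 : (fun j => F (x (φ (2 * j)))) = fun _ => (1 : ℝ) := by
    funext j
    rw [hFx (2 * j), pow_mul]
    norm_num
  have ho1 : (fun j => F (x (φ (2 * j + 1)))) = fun _ => (-1 : ℝ) := by
    funext j
    rw [hFx (2 * j + 1), pow_succ, pow_mul]
    norm_num
  rw [he1] at heven
  rw [ho1] at hodd
  have h1 : l = 1 := tendsto_nhds_unique heven tendsto_const_nhds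
  have h2 : l = -1 := tendsto_nhds_unique hodd tendsto_const_nhds
  rw [h1] at h2
  norm_num at h2


end RosenthalNW

/-- A bounded subset `A` of a real Banach space is weakly precompact if and only if
every sequence in `A` has a weakly Cauchy subsequence. (Rosenthal's `ℓ₁` theorem.) -/
theorem stmt13 (X : Type*) [NormedAddCommGroup X] [NormedSpace ℝ X] [CompleteSpace X]
    (A : Set X) (hA : Bornology.IsBounded A) :
    WeaklyPrecompact A ↔
      ∀ x : ℕ → X, (∀ n, x n ∈ A) →
        ∃ φ : ℕ → ℕ, StrictMono φ ∧ IsWeaklyCauchy (x ∘ φ) := by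
  constructor
  · rintro ⟨hbd, hno⟩ x hx
    exact RosenthalNW.forward hbd hno x hx
  · intro hseq
    refine ⟨hA, ?_⟩
    intro x hx hl1
    obtain ⟨φ, hφ, hwc⟩ := hseq x hx
    exact RosenthalNW.backward x φ hφ hl1 (fun f => hwc f)
end
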